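/- arXiv:1506.04850 — 6 statements merged into one kernel-verified Lean document; each statement's English description precedes it below -/
import Mathlib

section
/- For the lazy simple random walk on the cycle C_n with n vertices, the total variation mixing time satisfies t_mix(C_n) ≤ n², i.e., for t = n², max_x ‖P^t(x,·) − π‖_TV ≤ 1/4. -/
open Complex Finset Real

namespace CycleMixingAux

variable {n : ℕ} [NeZero n]

/-- The standard character on `ZMod n`, as a complex number. -/
noncomputable def e (j : ZMod n) : ℂ := ZMod.stdAddChar j

lemma e_add (a b : ZMod n) : e (a + b) = e a * e b := AddChar.map_add_eq_mul _ a b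

lemma e_zero : e (0 : ZMod n) = 1 := AddChar.map_zero_eq_one _

lemma e_abs (j : ZMod n) : ‖e j‖ = 1 := by
  rw [e, ZMod.stdAddChar_apply]; exact Circle.norm_coe _

lemma e_apply (j : ZMod n) : e j = Complex.exp (2 * π * I * j.val / n) := by
  rw [e, ZMod.stdAddChar_apply, ZMod.toCircle_apply]

/-- Character orthogonality. -/
lemma sum_e (z : ZMod n) :
    ∑ j : ZMod n, e (j * z) = if z = 0 then (n : ℂ) else 0 := by
  split_ifs with h
  · simp [h, e_zero, Finset.card_univ]
  · have h1 : (ZMod.stdAddChar (N := n)).mulShift z ≠ 1 :=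
      ZMod.isPrimitive_stdAddChar n h
    have h0 : (ZMod.stdAddChar (N := n)).mulShift z ≠ 0 := by
      rwa [← AddChar.one_eq_zero]
    have := AddChar.sum_eq_zero_iff_ne_zero.mpr h0
    simpa [AddChar.mulShift_apply, e, mul_comm] using this

/-- Eigenvalues of the lazy walk (as complex numbers). -/
noncomputable def μ (j : ZMod n) : ℂ := 1 / 2 + 1 / 4 * e j + 1 / 4 * e (-j)

/-- Claimed formula for the `t`-step transition probabilities. -/
noncomputable def Q (t : ℕ) (x y : ZMod n) : ℂ :=
    (n : ℂ)⁻¹ * ∑ j : ZMod n, μ j ^ t * e (j * (x - y))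

/-- The real eigenvalue. -/
noncomputable def lam (j : ZMod n) : ℝ := Real.cos (π * j.val / n) ^ 2

lemma mu_eq_lam (j : ZMod n) : μ j = (lam j : ℂ) := by
  have hn : (n : ℝ) ≠ 0 := Nat.cast_ne_zero.mpr (NeZero.ne n)
  have h1 : e j * e (-j) = 1 := by
    rw [← e_add]; simp [e_zero]
  have h2 : e j = Complex.exp (((2 * π * j.val / n : ℝ) : ℂ) * I) := by
    rw [e_apply]; push_cast; ring_nf
  have h3 : e (-j) = Complex.exp (-(((2 * π * j.val / n : ℝ) : ℂ) * I)) := by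
    have hinv : e (-j) = (e j)⁻¹ :=
      eq_inv_of_mul_eq_one_left (by rwa [mul_comm] at h1)
    rw [hinv, h2, ← Complex.exp_neg]
  have key : e j + e (-j) = 2 * Real.cos (2 * π * j.val / n) := by
    rw [h2, h3]
    rw [show Complex.exp (((2 * π * j.val / n : ℝ) : ℂ) * I) +
        Complex.exp (-(((2 * π * j.val / n : ℝ) : ℂ) * I)) =
        2 * Complex.cos ((2 * π * j.val / n : ℝ) : ℂ) by rw [Complex.cos]; ring]
    rw [← Complex.ofReal_cos]
  have hcos : lam j = 1 / 2 + Real.cos (2 * π * j.val / n) / 2 := by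
    rw [lam, Real.cos_sq]
    congr 1
    congr 1
    ring
  rw [μ, hcos]
  rw [show ((1/2 + Real.cos (2 * π * j.val / n)/2 : ℝ) : ℂ)
      = 1/2 + ((Real.cos (2 * π * j.val / n) : ℝ) : ℂ)/2 by push_cast; ring]
  rw [show (1:ℂ)/2 + 1/4 * e j + 1/4 * e (-j) = 1/2 + (e j + e (-j))/4 by ring, key]
  ring

lemma lam_nonneg (j : ZMod n) : 0 ≤ lam j := sq_nonneg _

lemma lam_le_one (j : ZMod n) : lam j ≤ 1 := by
  rw [lam]
  have := Real.neg_one_le_cos (π * j.val / n)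
  have := Real.cos_le_one (π * j.val / n)
  nlinarith

/-- `P^t x y = Q t x y` (entrywise, over ℂ). -/
lemma pow_eq (P : Matrix (ZMod n) (ZMod n) ℝ)
    (hP : ∀ x y, P x y = (1 / 2) * (if y = x then 1 else 0)
        + (1 / 4) * (if y = x + 1 then 1 else 0) + (1 / 4) * (if y = x - 1 then 1 else 0))
    (t : ℕ) (x y : ZMod n) : (((P ^ t) x y : ℝ) : ℂ) = Q t x y := by
  induction t generalizing y with
  | zero =>
    have hn : (n : ℂ) ≠ 0 := Nat.cast_ne_zero.mpr (NeZero.ne n)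
    rw [pow_zero, Matrix.one_apply, Q]
    simp only [pow_zero, one_mul, sum_e, sub_eq_zero]
    split_ifs with h
    · push_cast
      exact (inv_mul_cancel₀ hn).symm
    · push_cast
      rw [mul_zero]
  | succ t ih =>
    have step1 : (((P ^ (t+1)) x y : ℝ) : ℂ)
        = ∑ z : ZMod n, Q t x z * ((P z y : ℝ) : ℂ) := by
      rw [pow_succ, Matrix.mul_apply]
      push_cast
      exact Finset.sum_congr rfl fun z _ => by rw [ih z]
    have hsum : ∀ c : ZMod n,
        (∑ z : ZMod n, Q t x z * (if z = c then (1:ℂ) else 0)) = Q t x c := by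
      intro c
      rw [Finset.sum_congr rfl (fun z _ => by
        rw [mul_ite, mul_one, mul_zero])]
      exact Finset.sum_ite_eq' _ _ _ |>.trans (by simp)
    have step2 : (∑ z : ZMod n, Q t x z * ((P z y : ℝ) : ℂ))
        = 1/2 * Q t x y + 1/4 * Q t x (y - 1) + 1/4 * Q t x (y + 1) := by
      have hrw : ∀ z : ZMod n, ((P z y : ℝ) : ℂ)
          = 1/2 * (if z = y then 1 else 0) + 1/4 * (if z = y - 1 then 1 else 0)
            + 1/4 * (if z = y + 1 then 1 else 0) := by
        intro z
        have c1 : (if y = z then (1:ℂ) else 0) = (if z = y then 1 else 0) := by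
          simp [eq_comm]
        have c2 : (if y = z + 1 then (1:ℂ) else 0) = (if z = y - 1 then 1 else 0) := by
          by_cases h : z = y - 1
          · rw [if_pos h, if_pos (by rw [h]; ring)]
          · rw [if_neg h, if_neg (fun hh => h (by rw [hh]; ring))]
        have c3 : (if y = z - 1 then (1:ℂ) else 0) = (if z = y + 1 then 1 else 0) := by
          by_cases h : z = y + 1
          · rw [if_pos h, if_pos (by rw [h]; ring)]
          · rw [if_neg h, if_neg (fun hh => h (by rw [hh]; ring))]
        rw [hP z y]
        push_cast [apply_ite (fun r : ℝ => (r : ℂ))]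
        rw [c1, c2, c3]
      calc (∑ z : ZMod n, Q t x z * ((P z y : ℝ) : ℂ))
          = ∑ z : ZMod n, (1/2 * (Q t x z * (if z = y then (1:ℂ) else 0))
            + 1/4 * (Q t x z * (if z = y - 1 then (1:ℂ) else 0))
            + 1/4 * (Q t x z * (if z = y + 1 then (1:ℂ) else 0))) := by
            refine Finset.sum_congr rfl fun z _ => ?_
            rw [hrw z]; ring
        _ = 1/2 * Q t x y + 1/4 * Q t x (y - 1) + 1/4 * Q t x (y + 1) := by
            rw [Finset.sum_add_distrib, Finset.sum_add_distrib,
              ← Finset.mul_sum, ← Finset.mul_sum, ← Finset.mul_sum,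
              hsum y, hsum (y - 1), hsum (y + 1)]
    have step3 : 1/2 * Q t x y + 1/4 * Q t x (y - 1) + 1/4 * Q t x (y + 1)
        = Q (t+1) x y := by
      simp only [Q, Finset.mul_sum]
      rw [← Finset.sum_add_distrib, ← Finset.sum_add_distrib]
      refine Finset.sum_congr rfl fun j _ => ?_
      have ha : j * (x - (y - 1)) = j * (x - y) + j := by ring
      have hb : j * (x - (y + 1)) = j * (x - y) + (-j) := by ring
      rw [ha, hb, e_add, e_add, pow_succ, μ]
      ring
    rw [step1, step2, step3]

/-- Entrywise distance from uniform. -/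
lemma entry_bound (P : Matrix (ZMod n) (ZMod n) ℝ)
    (hP : ∀ x y, P x y = (1 / 2) * (if y = x then 1 else 0)
        + (1 / 4) * (if y = x + 1 then 1 else 0) + (1 / 4) * (if y = x - 1 then 1 else 0))
    (t : ℕ) (x y : ZMod n) :
    |(P ^ t) x y - (n : ℝ)⁻¹|
      ≤ (n : ℝ)⁻¹ * ∑ j ∈ Finset.univ.erase (0 : ZMod n), lam j ^ t := by
  have hn : (n : ℂ) ≠ 0 := Nat.cast_ne_zero.mpr (NeZero.ne n)
  have h0 : Q t x y - (n : ℂ)⁻¹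
      = (n : ℂ)⁻¹ * ∑ j ∈ Finset.univ.erase (0 : ZMod n), μ j ^ t * e (j * (x - y)) := by
    have hmem : (0 : ZMod n) ∈ (Finset.univ : Finset (ZMod n)) := Finset.mem_univ _
    have h00 : μ (0 : ZMod n) ^ t * e ((0 : ZMod n) * (x - y)) = 1 := by
      have hμ : μ (0 : ZMod n) = 1 := by
        rw [μ, neg_zero, e_zero]; norm_num
      rw [hμ, one_pow, zero_mul, e_zero, mul_one]
    have hsplit : (∑ j : ZMod n, μ j ^ t * e (j * (x - y)))
        = 1 + ∑ j ∈ Finset.univ.erase (0 : ZMod n), μ j ^ t * e (j * (x - y)) := by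
      rw [← Finset.add_sum_erase _ (fun j : ZMod n => μ j ^ t * e (j * (x - y))) hmem]
      simp only [h00]
    rw [Q, hsplit, mul_add, mul_one]
    ring
  have habs : |(P ^ t) x y - (n : ℝ)⁻¹|
      = ‖Q t x y - (n : ℂ)⁻¹‖ := by
    rw [← pow_eq P hP t x y]
    rw [show (((P ^ t) x y : ℝ) : ℂ) - (n : ℂ)⁻¹ = (((P ^ t) x y - (n:ℝ)⁻¹ : ℝ) : ℂ) by
      push_cast; ring]
    rw [Complex.norm_real, Real.norm_eq_abs]
  rw [habs, h0, norm_mul]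
  have h1 : ‖(n : ℂ)⁻¹‖ = (n : ℝ)⁻¹ := by
    rw [norm_inv, Complex.norm_natCast]
  rw [h1]
  refine mul_le_mul_of_nonneg_left ?_ (by positivity)
  refine le_trans (norm_sum_le _ _) ?_
  refine Finset.sum_le_sum fun j _ => ?_
  rw [norm_mul, norm_pow, e_abs, mul_one, mu_eq_lam, Complex.norm_real, Real.norm_eq_abs,
    _root_.abs_of_nonneg (lam_nonneg j)]

/-- Eigenvalue decay: for `j ≠ 0`, `lam j ^ (n^2) ≤ (1/9)^(j.val) + (1/9)^(n - j.val)`. -/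
lemma lam_pow_bound (j : ZMod n) (hj : j ≠ 0) :
    lam j ^ (n ^ 2) ≤ (1/9 : ℝ) ^ (j.val) + (1/9 : ℝ) ^ (n - j.val) := by
  have hnn : 0 < n := Nat.pos_of_ne_zero (NeZero.ne n)
  have hn : (0:ℝ) < (n:ℝ) := by exact_mod_cast hnn
  set k : ℕ := j.val with hk
  have hk1 : 1 ≤ k := Nat.one_le_iff_ne_zero.mpr (by
    intro h; exact hj (by rwa [← ZMod.val_eq_zero]))
  have hkn : k < n := ZMod.val_lt j
  -- m = min k (n - k)
  set m : ℕ := min k (n - k) with hm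
  have hm1 : 1 ≤ m := le_min hk1 (by omega)
  have hm2 : 2 * m ≤ n := by
    rcases min_le_iff.mp (le_refl m) with h | h <;> omega
  -- sin (π k / n) = sin (π m / n)
  have hsin_eq : Real.sin (π * k / n) = Real.sin (π * m / n) := by
    rcases le_or_gt k (n - k) with h | h
    · rw [hm, min_eq_left h]
    · rw [hm, min_eq_right h.le]
      have hval : ((n - k : ℕ) : ℝ) = (n : ℝ) - k := by
        push_cast [Nat.cast_sub hkn.le]; ring
      rw [hval, show π * ((n:ℝ) - k) / n = π - π * k / n by field_simp,
        Real.sin_pi_sub]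
  -- Jordan: sin (π m / n) ≥ 2 m / n
  have hmn : (m : ℝ) ≤ (n : ℝ) / 2 := by
    rw [le_div_iff₀ (by norm_num : (0:ℝ) < 2)]
    exact_mod_cast (by omega : m * 2 ≤ n)
  have hjordan : 2 * (m : ℝ) / n ≤ Real.sin (π * m / n) := by
    have h1 : (0:ℝ) ≤ π * m / n := by positivity
    have h2 : π * m / n ≤ π / 2 := by
      rw [div_le_div_iff₀ hn (by norm_num : (0:ℝ) < 2)]
      nlinarith [Real.pi_pos]
    have := Real.mul_le_sin h1 h2
    calc 2 * (m : ℝ) / n = 2 / π * (π * m / n) := by field_simp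
      _ ≤ Real.sin (π * m / n) := this
  -- lam j ≤ 1 - 4 m² / n²
  have hlam : lam j ≤ 1 - 4 * (m:ℝ)^2 / (n:ℝ)^2 := by
    have hs : Real.sin (π * k / n) ^ 2 + Real.cos (π * k / n) ^ 2 = 1 :=
      Real.sin_sq_add_cos_sq _
    have hsin2 : (2 * (m : ℝ) / n)^2 ≤ Real.sin (π * k / n) ^ 2 := by
      rw [hsin_eq]
      have h0 : (0:ℝ) ≤ 2 * (m:ℝ) / n := by positivity
      nlinarith
    rw [lam]
    have : (2 * (m : ℝ) / n)^2 = 4 * (m:ℝ)^2 / (n:ℝ)^2 := by field_simp; ring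
    nlinarith
  -- exponential bound
  have hexp : lam j ≤ Real.exp (-(4 * (m:ℝ)^2 / (n:ℝ)^2)) := by
    calc lam j ≤ 1 - 4 * (m:ℝ)^2 / (n:ℝ)^2 := hlam
      _ = 1 + (-(4 * (m:ℝ)^2 / (n:ℝ)^2)) := by ring
      _ ≤ Real.exp (-(4 * (m:ℝ)^2 / (n:ℝ)^2)) := by
          rw [add_comm]; exact Real.add_one_le_exp _
  have hpow : lam j ^ (n^2) ≤ Real.exp (-(4 * (m:ℝ)^2)) := by
    calc lam j ^ (n^2) ≤ (Real.exp (-(4 * (m:ℝ)^2 / (n:ℝ)^2))) ^ (n^2) :=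
          pow_le_pow_left₀ (lam_nonneg j) hexp _
      _ = Real.exp ((n^2 : ℕ) * (-(4 * (m:ℝ)^2 / (n:ℝ)^2))) := by
          rw [← Real.exp_nat_mul]
      _ = Real.exp (-(4 * (m:ℝ)^2)) := by
          congr 1
          have : ((n^2 : ℕ) : ℝ) = (n:ℝ)^2 := by push_cast; ring
          rw [this]
          field_simp
  -- exp(-4m²) ≤ exp(-4m) ≤ (1/9)^m
  have he9 : Real.exp (-(4:ℝ)) ≤ 1/9 := by
    rw [show (-(4:ℝ)) = -(4:ℝ) from rfl]
    have h3 : (3:ℝ) ≤ Real.exp 2 := by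
      have := Real.add_one_le_exp (2:ℝ); linarith
    have h9 : (9:ℝ) ≤ Real.exp 4 := by
      have : Real.exp 4 = Real.exp 2 * Real.exp 2 := by
        rw [← Real.exp_add]; norm_num
      nlinarith [Real.exp_pos (2:ℝ)]
    rw [Real.exp_neg, inv_le_comm₀ (Real.exp_pos _) (by norm_num)]
    linarith
  have hm9 : Real.exp (-(4 * (m:ℝ)^2)) ≤ (1/9 : ℝ) ^ m := by
    calc Real.exp (-(4 * (m:ℝ)^2)) ≤ Real.exp (-(4 * (m:ℝ))) := by
          apply Real.exp_le_exp.mpr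
          have h1 : (1:ℝ) ≤ (m:ℝ) := by exact_mod_cast hm1
          nlinarith
      _ = (Real.exp (-(4:ℝ))) ^ m := by
          rw [← Real.exp_nat_mul]; congr 1; ring
      _ ≤ (1/9 : ℝ) ^ m := pow_le_pow_left₀ (Real.exp_pos _).le he9 m
  have hfinal : (1/9 : ℝ) ^ m ≤ (1/9 : ℝ) ^ k + (1/9 : ℝ) ^ (n - k) := by
    rcases le_or_gt k (n - k) with h | h
    · rw [hm, min_eq_left h]
      have : (0:ℝ) ≤ (1/9:ℝ)^(n-k) := by positivity
      linarith
    · rw [hm, min_eq_right h.le]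
      have : (0:ℝ) ≤ (1/9:ℝ)^k := by positivity
      linarith
  calc lam j ^ (n^2) ≤ Real.exp (-(4 * (m:ℝ)^2)) := hpow
    _ ≤ (1/9 : ℝ) ^ m := hm9
    _ ≤ (1/9 : ℝ) ^ k + (1/9 : ℝ) ^ (n - k) := hfinal

/-- Sum of geometric tail. -/
lemma geom_tail_bound : ∀ m : ℕ, (∑ k ∈ Finset.Ico 1 m, (1/9 : ℝ) ^ k) ≤ 1/8 := by
  intro m
  rcases Nat.eq_zero_or_pos m with h | h
  · subst h; simp
  have h1 : ∑ k ∈ Finset.Ico 1 m, (1/9 : ℝ) ^ k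
      = ∑ i ∈ Finset.range (m - 1), (1/9 : ℝ) ^ (1 + i) := by
    rw [Finset.sum_Ico_eq_sum_range]
  rw [h1]
  have h2 : ∑ i ∈ Finset.range (m - 1), (1/9 : ℝ) ^ (1 + i)
      = (1/9 : ℝ) * ∑ i ∈ Finset.range (m - 1), (1/9 : ℝ) ^ i := by
    rw [Finset.mul_sum]
    exact Finset.sum_congr rfl fun i _ => by rw [pow_add, pow_one]
  rw [h2]
  have h3 : ∑ i ∈ Finset.range (m - 1), (1/9 : ℝ) ^ i ≤ 9/8 := by
    rw [geom_sum_eq (by norm_num : (1/9 : ℝ) ≠ 1)]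
    have hp : (0:ℝ) ≤ (1/9:ℝ) ^ (m-1) := by positivity
    rw [div_le_iff_of_neg (by norm_num : (1/9 : ℝ) - 1 < 0)]
    nlinarith
  nlinarith

/-- The total eigenvalue sum is at most 1/4. -/
lemma sum_lam_bound :
    (∑ j ∈ Finset.univ.erase (0 : ZMod n), lam j ^ (n ^ 2)) ≤ 1/4 := by
  have hnn : 0 < n := Nat.pos_of_ne_zero (NeZero.ne n)
  have step1 : (∑ j ∈ Finset.univ.erase (0 : ZMod n), lam j ^ (n ^ 2))
      ≤ ∑ j ∈ Finset.univ.erase (0 : ZMod n),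
          ((1/9 : ℝ) ^ (j.val) + (1/9 : ℝ) ^ (n - j.val)) :=
    Finset.sum_le_sum fun j hj =>
      lam_pow_bound j (Finset.ne_of_mem_erase hj)
  have step2 : (∑ j ∈ Finset.univ.erase (0 : ZMod n),
          ((1/9 : ℝ) ^ (j.val) + (1/9 : ℝ) ^ (n - j.val)))
      = ∑ k ∈ Finset.Ico 1 n, ((1/9 : ℝ) ^ k + (1/9 : ℝ) ^ (n - k)) := by
    refine Finset.sum_nbij' (fun j => j.val) (fun k => (k : ZMod n)) ?_ ?_ ?_ ?_ ?_
    · intro j hj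
      have hj0 : j ≠ 0 := Finset.ne_of_mem_erase hj
      refine Finset.mem_Ico.mpr ⟨?_, ZMod.val_lt j⟩
      exact Nat.one_le_iff_ne_zero.mpr (fun h => hj0 (by rwa [← ZMod.val_eq_zero]))
    · intro k hk
      obtain ⟨hk1, hk2⟩ := Finset.mem_Ico.mp hk
      refine Finset.mem_erase.mpr ⟨?_, Finset.mem_univ _⟩
      intro h
      have hdvd := (ZMod.natCast_eq_zero_iff k n).mp h
      exact absurd (Nat.le_of_dvd (by omega) hdvd) (by omega)
    · intro j _; exact ZMod.natCast_zmod_val j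
    · intro k hk
      obtain ⟨_, hk2⟩ := Finset.mem_Ico.mp hk
      exact ZMod.val_cast_of_lt hk2
    · intro j _; rfl
  have step3 : (∑ k ∈ Finset.Ico 1 n, ((1/9 : ℝ) ^ k + (1/9 : ℝ) ^ (n - k)))
      = (∑ k ∈ Finset.Ico 1 n, (1/9 : ℝ) ^ k)
        + ∑ k ∈ Finset.Ico 1 n, (1/9 : ℝ) ^ (n - k) := Finset.sum_add_distrib
  have step4 : (∑ k ∈ Finset.Ico 1 n, (1/9 : ℝ) ^ (n - k))
      = ∑ k ∈ Finset.Ico 1 n, (1/9 : ℝ) ^ k := by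
    refine Finset.sum_nbij' (fun k => n - k) (fun k => n - k) ?_ ?_ ?_ ?_ ?_ <;>
      intro k hk <;> (try obtain ⟨h1, h2⟩ := Finset.mem_Ico.mp hk)
    · simp only [Finset.mem_Ico] at *; omega
    · simp only [Finset.mem_Ico] at *; omega
    · show n - (n - k) = k; omega
    · show n - (n - k) = k; omega
    · simp only []
  calc (∑ j ∈ Finset.univ.erase (0 : ZMod n), lam j ^ (n ^ 2))
      ≤ ∑ k ∈ Finset.Ico 1 n, ((1/9 : ℝ) ^ k + (1/9 : ℝ) ^ (n - k)) := by
        rw [← step2]; exact step1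
    _ = 2 * ∑ k ∈ Finset.Ico 1 n, (1/9 : ℝ) ^ k := by rw [step3, step4]; ring
    _ ≤ 2 * (1/8) := by
        have h8 : (∑ k ∈ Finset.Ico 1 n, (1/9 : ℝ) ^ k) ≤ 1/8 := CycleMixingAux.geom_tail_bound n
        linarith
    _ = 1/4 := by norm_num

end CycleMixingAux

/-- For lazy simple random walk on the cycle `C_n`, at time `t = n²` the total variation
distance to the uniform stationary distribution is at most `1/4` from every starting state;
in particular `t_mix(C_n) ≤ n²`. -/
theorem cycle_mixing (n : ℕ) [NeZero n]
    (P : Matrix (ZMod n) (ZMod n) ℝ)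
    (hP : ∀ x y, P x y = (1 / 2) * (if y = x then 1 else 0)
        + (1 / 4) * (if y = x + 1 then 1 else 0) + (1 / 4) * (if y = x - 1 then 1 else 0)) :
    ∀ x : ZMod n,
      (Finset.univ.sup' ⟨∅, Finset.mem_univ _⟩
        fun A : Finset (ZMod n) =>
          |∑ y ∈ A, (P ^ (n ^ 2)) x y - ∑ y ∈ A, ((n : ℝ))⁻¹|) ≤ 1 / 4 := by
  classical
  intro x
  set S : ℝ := ∑ j ∈ Finset.univ.erase (0 : ZMod n), CycleMixingAux.lam j ^ (n ^ 2) with hS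
  have hS0 : 0 ≤ S := Finset.sum_nonneg fun j _ =>
    pow_nonneg (CycleMixingAux.lam_nonneg j) _
  have hS4 : S ≤ 1/4 := CycleMixingAux.sum_lam_bound
  have key : ∀ y : ZMod n, |(P ^ (n ^ 2)) x y - (n : ℝ)⁻¹| ≤ (n : ℝ)⁻¹ * S :=
    fun y => CycleMixingAux.entry_bound P hP (n ^ 2) x y
  apply Finset.sup'_le
  intro A _
  have h1 : |∑ y ∈ A, (P ^ (n ^ 2)) x y - ∑ y ∈ A, ((n : ℝ))⁻¹|
      = |∑ y ∈ A, ((P ^ (n ^ 2)) x y - (n : ℝ)⁻¹)| := by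
    rw [Finset.sum_sub_distrib]
  rw [h1]
  calc |∑ y ∈ A, ((P ^ (n ^ 2)) x y - (n : ℝ)⁻¹)|
      ≤ ∑ y ∈ A, |(P ^ (n ^ 2)) x y - (n : ℝ)⁻¹| := Finset.abs_sum_le_sum_abs _ _
    _ ≤ ∑ y ∈ (Finset.univ : Finset (ZMod n)), |(P ^ (n ^ 2)) x y - (n : ℝ)⁻¹| :=
        Finset.sum_le_sum_of_subset_of_nonneg (Finset.subset_univ A)
          (fun y _ _ => abs_nonneg _)
    _ ≤ ∑ _y ∈ (Finset.univ : Finset (ZMod n)), (n : ℝ)⁻¹ * S :=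
        Finset.sum_le_sum fun y _ => key y
    _ = (n : ℝ) * ((n : ℝ)⁻¹ * S) := by
        rw [Finset.sum_const, Finset.card_univ, ZMod.card, nsmul_eq_mul]
    _ = S := by
        have hn' : (n:ℝ) ≠ 0 := Nat.cast_ne_zero.mpr (NeZero.ne n)
        field_simp
    _ ≤ 1/4 := hS4
end

section
/- For lazy random walk on the d-dimensional torus Z_n^d (d ≥ 2), the total variation mixing time satisfies t_mix(Z_n^d) ≤ 3 d (log d) n². -/
open Finset

namespace TorusMix

variable {n : ℕ} [NeZero n]

lemma psi_orth (t : ZMod n) :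
    ∑ a : ZMod n, ZMod.stdAddChar (t * a) = if t = 0 then (n : ℂ) else 0 := by
  split_ifs with h
  · simp [h, ZMod.card]
  · exact AddChar.sum_eq_zero_of_ne_one (ZMod.isPrimitive_stdAddChar n h)

lemma psi_abs (a : ZMod n) : ‖ZMod.stdAddChar a‖ = 1 := by
  rw [ZMod.stdAddChar_apply]
  exact Circle.norm_coe _

lemma psi_add_neg (a : ZMod n) :
    ZMod.stdAddChar a + ZMod.stdAddChar (-a)
      = (2 * Real.cos (2 * Real.pi * a.val / n) : ℝ) := by
  have h1 : ZMod.stdAddChar a = Complex.exp (2 * Real.pi * Complex.I * a.val / n) := by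
    rw [ZMod.stdAddChar_apply, ZMod.toCircle_apply]
  have h2 : (-a : ZMod n) = ((-(a.val : ℤ) : ℤ) : ZMod n) := by
    push_cast [ZMod.natCast_zmod_val]
    ring
  have h3 : ZMod.stdAddChar (-a) = Complex.exp (2 * Real.pi * Complex.I * (-(a.val:ℤ)) / n) := by
    rw [h2, ZMod.stdAddChar_coe]
    norm_num
  have key : ∀ θ : ℝ, Complex.exp (θ * Complex.I) + Complex.exp ((-θ : ℝ) * Complex.I)
      = ((2 * Real.cos θ : ℝ) : ℂ) := by
    intro θ
    rw [Complex.exp_mul_I, Complex.exp_mul_I]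
    push_cast
    rw [Complex.cos_neg, Complex.sin_neg]
    ring
  have e1 : (2 * Real.pi * Complex.I * a.val / n)
      = ((2 * Real.pi * a.val / n : ℝ) : ℂ) * Complex.I := by push_cast; ring
  have e2 : (2 * Real.pi * Complex.I * (-(a.val:ℤ)) / n)
      = ((-(2 * Real.pi * a.val / n) : ℝ) : ℂ) * Complex.I := by push_cast; ring
  rw [h1, h3, e1, e2, key]

variable {d : ℕ}

/-- Multidimensional character. -/
noncomputable def chr (k z : Fin d → ZMod n) : ℂ := ∏ i, ZMod.stdAddChar (k i * z i)

/-- Eigenvalue of the lazy walk kernel. -/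
noncomputable def lam (d : ℕ) (n : ℕ) (k : Fin d → ZMod n) : ℝ :=
  1 / 2 + 1 / (2 * d) * ∑ i, Real.cos (2 * Real.pi * (k i).val / n)

/-- The step kernel (as a function of the displacement). -/
noncomputable def ker (d : ℕ) (n : ℕ) [NeZero n] (z : Fin d → ZMod n) : ℝ :=
  (1 / 2) * (if z = 0 then 1 else 0)
    + ∑ i : Fin d,
      ((1 / (4 * (d : ℝ))) * (if z = Function.update (0 : Fin d → ZMod n) i 1 then 1 else 0)
        + (1 / (4 * (d : ℝ))) * (if z = Function.update (0 : Fin d → ZMod n) i (-1) then 1 else 0))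

lemma chr_zero_right (k : Fin d → ZMod n) : chr k 0 = 1 := by
  simp [chr]

lemma chr_zero_left (z : Fin d → ZMod n) : chr 0 z = 1 := by
  simp [chr]

lemma chr_add (k z w : Fin d → ZMod n) : chr k (z + w) = chr k z * chr k w := by
  rw [chr, chr, chr, ← Finset.prod_mul_distrib]
  refine Finset.prod_congr rfl fun i _ => ?_
  rw [Pi.add_apply, mul_add, AddChar.map_add_eq_mul]

lemma chr_abs (k z : Fin d → ZMod n) : ‖chr k z‖ = 1 := by
  rw [chr, norm_prod]
  simp [psi_abs]

lemma chr_update (k : Fin d → ZMod n) (i : Fin d) (c : ZMod n) :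
    chr k (Function.update (0 : Fin d → ZMod n) i c) = ZMod.stdAddChar (k i * c) := by
  rw [chr]
  have := Finset.prod_eq_single (f := fun j => ZMod.stdAddChar (k j * Function.update (0 : Fin d → ZMod n) i c j)) i
    (fun j _ hj => by rw [Function.update_of_ne hj]; simp)
    (fun h => absurd (Finset.mem_univ i) h)
  rw [this]; rw [Function.update_self]

lemma sum_chr (z : Fin d → ZMod n) :
    ∑ k : Fin d → ZMod n, chr k z = if z = 0 then ((n : ℂ)) ^ d else 0 := by
  have : ∑ k : Fin d → ZMod n, chr k z = ∏ i : Fin d, ∑ a : ZMod n, ZMod.stdAddChar (a * z i) := by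
    rw [Fintype.prod_sum fun i a => ZMod.stdAddChar (a * z i)]
    rfl
  rw [this]
  by_cases hz : z = 0
  · subst hz
    simp [Finset.prod_const, ZMod.card]
  · obtain ⟨i, hi⟩ : ∃ i, z i ≠ 0 := by
      by_contra h
      push_neg at h
      exact hz (funext h)
    rw [if_neg hz]
    refine Finset.prod_eq_zero (Finset.mem_univ i) ?_
    have : ∀ a : ZMod n, ZMod.stdAddChar (a * z i) = ZMod.stdAddChar (z i * a) := by
      intro a; rw [mul_comm]
    simp_rw [this]
    rw [psi_orth, if_neg hi]

lemma ker_hat (hd : 0 < d) (k : Fin d → ZMod n) :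
    ∑ z : Fin d → ZMod n, ((ker d n z : ℝ) : ℂ) * chr k z = ((lam d n k : ℝ) : ℂ) := by
  have hsum : ∀ (c : Fin d → ZMod n),
      ∑ z : Fin d → ZMod n, (if z = c then (1 : ℂ) else 0) * chr k z = chr k c := by
    intro c
    simp [ite_mul]
  have expand : ∀ z : Fin d → ZMod n, ((ker d n z : ℝ) : ℂ) * chr k z
      = (1 / 2) * ((if z = 0 then (1 : ℂ) else 0) * chr k z)
        + ∑ i : Fin d,
          ((1 / (4 * (d : ℂ))) * ((if z = Function.update (0 : Fin d → ZMod n) i 1 then (1 : ℂ) else 0) * chr k z)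
            + (1 / (4 * (d : ℂ))) * ((if z = Function.update (0 : Fin d → ZMod n) i (-1) then (1 : ℂ) else 0) * chr k z)) := by
    intro z
    rw [ker]
    simp only [Complex.ofReal_add, Complex.ofReal_mul, Complex.ofReal_sum, Complex.ofReal_div,
      Complex.ofReal_one, Complex.ofReal_zero, Complex.ofReal_ofNat, Complex.ofReal_natCast,
      apply_ite (Complex.ofReal)]
    rw [add_mul, Finset.sum_mul]
    congr 1
    · ring
    · exact Finset.sum_congr rfl fun i _ => by ring
  simp_rw [expand]
  rw [Finset.sum_add_distrib, Finset.sum_comm]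
  rw [← Finset.mul_sum, hsum 0, chr_zero_right]
  have inner : ∀ i : Fin d,
      (∑ z : Fin d → ZMod n,
        ((1 / (4 * (d : ℂ))) * ((if z = Function.update (0 : Fin d → ZMod n) i 1 then (1 : ℂ) else 0) * chr k z)
          + (1 / (4 * (d : ℂ))) * ((if z = Function.update (0 : Fin d → ZMod n) i (-1) then (1 : ℂ) else 0) * chr k z)))
      = (1 / (4 * (d : ℂ))) * ((2 * Real.cos (2 * Real.pi * (k i).val / n) : ℝ) : ℂ) := by
    intro i
    rw [Finset.sum_add_distrib, ← Finset.mul_sum, ← Finset.mul_sum, hsum, hsum,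
      chr_update, chr_update, ← mul_add, mul_one, mul_neg_one, psi_add_neg]
  simp_rw [inner]
  rw [lam]
  have hdne : ((d : ℂ)) ≠ 0 := by
    exact_mod_cast Nat.cast_ne_zero.mpr hd.ne'
  push_cast
  have key : ∀ z : ℂ, 1 / (4 * (d : ℂ)) * (2 * z) = 1 / (2 * (d : ℂ)) * z := by
    intro z
    field_simp
    ring
  simp_rw [key, mul_one, Finset.mul_sum]

lemma lam_zero (hd : 0 < d) : lam d n (0 : Fin d → ZMod n) = 1 := by
  have : ∀ i : Fin d, Real.cos (2 * Real.pi * ((0 : Fin d → ZMod n) i).val / n) = 1 := by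
    intro i
    simp [ZMod.val_zero]
  rw [lam]
  simp only [this, Finset.sum_const, Finset.card_univ, Fintype.card_fin, nsmul_eq_mul, mul_one]
  field_simp
  ring

lemma lam_nonneg (hd : 0 < d) (k : Fin d → ZMod n) : 0 ≤ lam d n k := by
  have h1 : (-(d : ℝ)) ≤ ∑ i : Fin d, Real.cos (2 * Real.pi * ((k i)).val / n) := by
    have : ∀ i : Fin d, (-1 : ℝ) ≤ Real.cos (2 * Real.pi * ((k i)).val / n) := fun i =>
      Real.neg_one_le_cos _
    calc (-(d : ℝ)) = ∑ _i : Fin d, (-1 : ℝ) := by simp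
      _ ≤ _ := Finset.sum_le_sum fun i _ => this i
  have hd' : (0 : ℝ) < d := by exact_mod_cast hd
  have h2 : (1 : ℝ) / (2 * d) * (-(d : ℝ)) ≤ 1 / (2 * d) * ∑ i : Fin d, Real.cos (2 * Real.pi * ((k i)).val / n) :=
    mul_le_mul_of_nonneg_left h1 (by positivity)
  have h3 : (1 : ℝ) / (2 * d) * (-(d : ℝ)) = -(1/2) := by field_simp
  rw [lam]
  nlinarith [h2, h3]

lemma pow_formula (hd : 0 < d) (P : Matrix (Fin d → ZMod n) (Fin d → ZMod n) ℝ)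
    (hP : ∀ x y, P x y = ker d n (y - x)) (t : ℕ) (x y : Fin d → ZMod n) :
    (((P ^ t) x y : ℝ) : ℂ)
      = ((n : ℂ) ^ d)⁻¹ * ∑ k : Fin d → ZMod n, ((lam d n k : ℝ) : ℂ) ^ t * chr k (x - y) := by
  have hn : ((n : ℂ)) ≠ 0 := by
    exact_mod_cast Nat.cast_ne_zero.mpr (NeZero.ne n)
  induction t generalizing y with
  | zero =>
    rw [pow_zero, Matrix.one_apply]
    simp_rw [pow_zero, one_mul]
    rw [sum_chr]
    by_cases h : x = y
    · rw [if_pos h, if_pos (by rw [h, sub_self])]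
      rw [inv_mul_cancel₀ (pow_ne_zero d hn)]
      simp
    · rw [if_neg h, if_neg (sub_ne_zero.mpr h)]
      simp
  | succ t ih =>
    rw [pow_succ, Matrix.mul_apply]
    push_cast
    simp_rw [ih, hP]
    have inner : ∀ k : Fin d → ZMod n,
        ∑ w : Fin d → ZMod n, ((ker d n (y - w) : ℝ) : ℂ) * chr k (x - w)
          = ((lam d n k : ℝ) : ℂ) * chr k (x - y) := by
      intro k
      have step1 : ∑ w : Fin d → ZMod n, ((ker d n (y - w) : ℝ) : ℂ) * chr k (x - w)
          = ∑ z : Fin d → ZMod n, ((ker d n z : ℝ) : ℂ) * chr k ((x - y) + z) := by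
        refine (Fintype.sum_equiv (Equiv.subLeft y)
          (fun z => ((ker d n z : ℝ) : ℂ) * chr k ((x - y) + z))
          (fun w => ((ker d n (y - w) : ℝ) : ℂ) * chr k (x - w)) fun z => ?_).symm
        simp only [Equiv.subLeft_apply, sub_sub_cancel]
        have e2 : x - (y - z) = (x - y) + z := by abel
        rw [e2]
      rw [step1]
      simp_rw [chr_add]
      calc ∑ z : Fin d → ZMod n, ((ker d n z : ℝ) : ℂ) * (chr k (x - y) * chr k z)
          = chr k (x - y) * ∑ z : Fin d → ZMod n, ((ker d n z : ℝ) : ℂ) * chr k z := by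
            rw [Finset.mul_sum]
            exact Finset.sum_congr rfl fun z _ => by ring
        _ = ((lam d n k : ℝ) : ℂ) * chr k (x - y) := by rw [ker_hat hd]; ring
    calc ∑ w : Fin d → ZMod n,
          (((n : ℂ) ^ d)⁻¹ * ∑ k : Fin d → ZMod n, ((lam d n k : ℝ) : ℂ) ^ t * chr k (x - w))
            * ((ker d n (y - w) : ℝ) : ℂ)
        = ((n : ℂ) ^ d)⁻¹ * ∑ k : Fin d → ZMod n, ((lam d n k : ℝ) : ℂ) ^ t
            * ∑ w : Fin d → ZMod n, ((ker d n (y - w) : ℝ) : ℂ) * chr k (x - w) := by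
          simp_rw [Finset.mul_sum, Finset.sum_mul]
          rw [Finset.sum_comm]
          refine Finset.sum_congr rfl fun k _ => Finset.sum_congr rfl fun w _ => by ring
      _ = ((n : ℂ) ^ d)⁻¹ * ∑ k : Fin d → ZMod n, ((lam d n k : ℝ) : ℂ) ^ (t + 1) * chr k (x - y) := by
          congr 1
          refine Finset.sum_congr rfl fun k _ => ?_
          rw [inner k, pow_succ]
          ring

lemma dev_bound (hd : 0 < d) (P : Matrix (Fin d → ZMod n) (Fin d → ZMod n) ℝ)
    (hP : ∀ x y, P x y = ker d n (y - x)) (t : ℕ) (x y : Fin d → ZMod n) :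
    |(P ^ t) x y - ((n : ℝ) ^ d)⁻¹|
      ≤ ((n : ℝ) ^ d)⁻¹ * ∑ k ∈ Finset.univ.erase (0 : Fin d → ZMod n), (lam d n k) ^ t := by
  have key : (((P ^ t) x y : ℝ) : ℂ) - (((n : ℝ) ^ d)⁻¹ : ℝ)
      = ((n : ℂ) ^ d)⁻¹ * ∑ k ∈ Finset.univ.erase (0 : Fin d → ZMod n),
          ((lam d n k : ℝ) : ℂ) ^ t * chr k (x - y) := by
    rw [pow_formula hd P hP t x y]
    rw [← Finset.add_sum_erase Finset.univ _ (Finset.mem_univ (0 : Fin d → ZMod n))]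
    rw [lam_zero hd, chr_zero_left]
    push_cast
    ring
  have habs : |(P ^ t) x y - ((n : ℝ) ^ d)⁻¹|
      = ‖((((P ^ t) x y : ℝ) : ℂ) - (((n : ℝ) ^ d)⁻¹ : ℝ))‖ := by
    rw [← Complex.ofReal_sub, Complex.norm_real, Real.norm_eq_abs]
  rw [habs, key, norm_mul]
  have h1 : ‖(((n : ℂ) ^ d)⁻¹)‖ = ((n : ℝ) ^ d)⁻¹ := by
    rw [norm_inv, norm_pow, Complex.norm_natCast]
  rw [h1]
  refine mul_le_mul_of_nonneg_left ?_ (by positivity)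
  calc ‖(∑ k ∈ Finset.univ.erase (0 : Fin d → ZMod n),
        ((lam d n k : ℝ) : ℂ) ^ t * chr k (x - y))‖
      ≤ ∑ k ∈ Finset.univ.erase (0 : Fin d → ZMod n),
        ‖(((lam d n k : ℝ) : ℂ) ^ t * chr k (x - y))‖ := by
        exact
          norm_sum_le (Finset.univ.erase (0 : Fin d → ZMod n))
            (fun k => ((lam d n k : ℝ) : ℂ) ^ t * chr k (x - y))
    _ ≤ ∑ k ∈ Finset.univ.erase (0 : Fin d → ZMod n), (lam d n k) ^ t := by
        refine Finset.sum_le_sum fun k _ => ?_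
        rw [norm_mul, norm_pow, chr_abs, mul_one, Complex.norm_real, Real.norm_eq_abs,
          abs_of_nonneg (lam_nonneg hd k)]

lemma exp_le_inv_one_sub {x : ℝ} (hx : x < 1) : Real.exp x ≤ (1 - x)⁻¹ := by
  have h1 : 0 < 1 - x := by linarith
  have h2 : 1 - x ≤ Real.exp (-x) := by
    have := Real.add_one_le_exp (-x)
    linarith
  have h3 : Real.exp x = (Real.exp (-x))⁻¹ := by
    rw [← Real.exp_neg, neg_neg]
  rw [h3]
  exact inv_anti₀ h1 h2

lemma exp_half_le_two : Real.exp (1/2 : ℝ) ≤ 2 := by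
  nlinarith [Real.exp_one_lt_d9, Real.exp_pos (1/2 : ℝ),
    (by rw [← Real.exp_add]; norm_num : Real.exp (1/2 : ℝ) * Real.exp (1/2 : ℝ) = Real.exp 1)]

lemma pow_aux (d m : ℕ) (hd0 : (0 : ℝ) < d) :
    Real.exp (-(12 * Real.log d * (m : ℝ))) = (((d : ℝ) ^ 12)⁻¹) ^ m := by
  rw [show -(12 * Real.log d * (m : ℝ)) = ((12 * m : ℕ) : ℝ) * (-Real.log d) by push_cast; ring]
  rw [Real.exp_nat_mul, Real.exp_neg, Real.exp_log hd0]
  rw [← inv_pow, pow_mul, inv_pow]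

lemma coord_bound (hd2 : 2 ≤ d) {t : ℕ} (ht : 3 * d * Real.log d * (n : ℝ) ^ 2 - 1 ≤ (t : ℝ))
    {a : ZMod n} (ha : a ≠ 0) :
    Real.exp (-((t : ℝ) * (1 - Real.cos (2 * Real.pi * a.val / n)) / (2 * d)))
      ≤ 2 * (((d : ℝ) ^ 12)⁻¹) ^ (min a.val (n - a.val)) := by
  have hn1 : 1 ≤ n := Nat.one_le_iff_ne_zero.mpr (NeZero.ne n)
  have hn0 : (0 : ℝ) < n := by exact_mod_cast hn1
  have hd0 : (0 : ℝ) < d := by positivity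
  have hd1 : (1 : ℝ) ≤ d := by exact_mod_cast le_trans (by norm_num) hd2
  have hL : 0 ≤ Real.log d := Real.log_nonneg hd1
  set L := Real.log d with hLdef
  set v := a.val with hv
  have hv2 : v < n := ZMod.val_lt a
  have hv1 : 1 ≤ v := Nat.one_le_iff_ne_zero.mpr (fun h => ha (by rwa [← ZMod.val_eq_zero]))
  set m := min v (n - v) with hm
  have hm1 : 1 ≤ m := by omega
  have h2m : 2 * m ≤ n := by omega
  have hmr : (1 : ℝ) ≤ m := by exact_mod_cast hm1
  have h2mr : 2 * (m : ℝ) ≤ n := by exact_mod_cast h2m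
  have hcos : Real.cos (2 * Real.pi * v / n) = Real.cos (2 * Real.pi * m / n) := by
    rcases le_or_gt v (n - v) with h | h
    · rw [hm, min_eq_left h]
    · have hmv : m = n - v := by omega
      have hcast : ((n - v : ℕ) : ℝ) = (n : ℝ) - v := by
        rw [Nat.cast_sub hv2.le]
      rw [hmv, hcast]
      have harg : 2 * Real.pi * ((n : ℝ) - v) / n = 2 * Real.pi - 2 * Real.pi * v / n := by
        field_simp
      rw [harg, Real.cos_two_pi_sub]
  have hub : Real.cos (2 * Real.pi * m / n) ≤ 1 - 8 * (m : ℝ) ^ 2 / (n : ℝ) ^ 2 := by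
    have h8 : |2 * Real.pi * (m : ℝ) / n| ≤ Real.pi := by
      rw [abs_of_nonneg (by positivity), div_le_iff₀ hn0]
      nlinarith [Real.pi_pos]
    have hc := Real.cos_le_one_sub_mul_cos_sq h8
    calc Real.cos (2 * Real.pi * m / n) ≤ 1 - 2 / Real.pi ^ 2 * (2 * Real.pi * m / n) ^ 2 := hc
      _ = 1 - 8 * (m : ℝ) ^ 2 / (n : ℝ) ^ 2 := by
          field_simp
          ring
  have hcc : 8 * (m : ℝ) ^ 2 / (n : ℝ) ^ 2 ≤ 1 - Real.cos (2 * Real.pi * v / n) := by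
    rw [hcos]; linarith
  have ht0 : (0 : ℝ) ≤ t := Nat.cast_nonneg t
  have hprod : (3 * d * L * (n : ℝ) ^ 2 - 1) * (8 * (m : ℝ) ^ 2 / (n : ℝ) ^ 2)
      ≤ (t : ℝ) * (1 - Real.cos (2 * Real.pi * v / n)) :=
    mul_le_mul ht hcc (by positivity) ht0
  have hXge : 12 * L * (m : ℝ) - 1 / 2 ≤ (t : ℝ) * (1 - Real.cos (2 * Real.pi * v / n)) / (2 * d) := by
    have hdiv : (3 * d * L * (n : ℝ) ^ 2 - 1) * (8 * (m : ℝ) ^ 2 / (n : ℝ) ^ 2) / (2 * d)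
        ≤ (t : ℝ) * (1 - Real.cos (2 * Real.pi * v / n)) / (2 * d) :=
      (div_le_div_iff_of_pos_right (by positivity)).mpr hprod
    have heq : (3 * d * L * (n : ℝ) ^ 2 - 1) * (8 * (m : ℝ) ^ 2 / (n : ℝ) ^ 2) / (2 * d)
        = 12 * L * (m : ℝ) ^ 2 - 4 * (m : ℝ) ^ 2 / (d * (n : ℝ) ^ 2) := by
      field_simp
      ring
    have h1 : 12 * L * (m : ℝ) ≤ 12 * L * (m : ℝ) ^ 2 := by
      nlinarith [mul_nonneg hL (by nlinarith : (0:ℝ) ≤ (m : ℝ) ^ 2 - (m : ℝ))]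
    have h2 : 4 * (m : ℝ) ^ 2 / (d * (n : ℝ) ^ 2) ≤ 1 / 2 := by
      rw [div_le_iff₀ (by positivity)]
      have hd2r : (2 : ℝ) ≤ d := by exact_mod_cast hd2
      nlinarith
    linarith [hdiv, heq.le, heq.ge]
  have hfinal : Real.exp (-((t : ℝ) * (1 - Real.cos (2 * Real.pi * v / n)) / (2 * d)))
      ≤ Real.exp (1 / 2 - 12 * L * m) := by
    apply Real.exp_le_exp.mpr
    linarith
  refine le_trans hfinal ?_
  have hsplit : Real.exp (1 / 2 - 12 * L * (m : ℝ)) = Real.exp (1/2 : ℝ) * Real.exp (-(12 * L * m)) := by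
    rw [← Real.exp_add, sub_eq_add_neg]
  rw [hsplit, hLdef, pow_aux d m hd0]
  exact mul_le_mul_of_nonneg_right exp_half_le_two (by positivity)

lemma geo_bound {r : ℝ} (hr0 : 0 ≤ r) (hr1 : r < 1) :
    ∑ a ∈ Finset.univ.erase (0 : ZMod n), r ^ a.val ≤ r * (1 - r)⁻¹ := by
  have hn1 : 1 ≤ n := Nat.one_le_iff_ne_zero.mpr (NeZero.ne n)
  have heq : ∑ a ∈ Finset.univ.erase (0 : ZMod n), r ^ a.val
      = ∑ v ∈ Finset.Ico 1 n, r ^ v := by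
    refine Finset.sum_nbij' (fun a => a.val) (fun v => (v : ZMod n)) ?_ ?_ ?_ ?_ ?_
    · intro a haa
      have ha : a ≠ 0 := (Finset.mem_erase.mp haa).1
      have h1 : 1 ≤ a.val := Nat.one_le_iff_ne_zero.mpr (fun h => ha (by rwa [← ZMod.val_eq_zero]))
      exact Finset.mem_Ico.mpr ⟨h1, ZMod.val_lt a⟩
    · intro v hv
      rw [Finset.mem_Ico] at hv
      refine Finset.mem_erase.mpr ⟨?_, Finset.mem_univ _⟩
      intro h0
      have h0' : (v : ZMod n) = 0 := h0
      have : (v : ZMod n).val = v := ZMod.val_cast_of_lt hv.2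
      rw [h0', ZMod.val_zero] at this
      omega
    · intro a _
      exact ZMod.natCast_zmod_val a
    · intro v hv
      rw [Finset.mem_Ico] at hv
      exact ZMod.val_cast_of_lt hv.2
    · intro a _
      rfl
  rw [heq, Finset.sum_Ico_eq_sum_range]
  have : ∀ i ∈ Finset.range (n - 1), r ^ (1 + i) = r * r ^ i := by
    intro i _
    rw [pow_add, pow_one]
  rw [Finset.sum_congr rfl this, ← Finset.mul_sum]
  refine mul_le_mul_of_nonneg_left ?_ hr0
  have h1r : (0 : ℝ) < 1 - r := by linarith
  rcases eq_or_ne r 1 with h | h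
  · exact absurd h hr1.ne
  rw [geom_sum_eq h]
  have e1 : (r ^ (n - 1) - 1) / (r - 1) = (1 - r ^ (n - 1)) / (1 - r) := by
    rw [← neg_div_neg_eq]
    ring_nf
  rw [e1, div_le_iff₀ h1r, inv_mul_cancel₀ h1r.ne']
  nlinarith [pow_nonneg hr0 (n - 1)]

lemma neg_val_sum {r : ℝ} :
    ∑ a ∈ Finset.univ.erase (0 : ZMod n), r ^ (-a).val
      = ∑ a ∈ Finset.univ.erase (0 : ZMod n), r ^ a.val := by
  refine Finset.sum_nbij' (fun a => -a) (fun a => -a) ?_ ?_ ?_ ?_ ?_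
  · intro a haa
    have ha : a ≠ 0 := (Finset.mem_erase.mp haa).1
    exact Finset.mem_erase.mpr ⟨neg_ne_zero.mpr ha, Finset.mem_univ _⟩
  · intro a haa
    have ha : a ≠ 0 := (Finset.mem_erase.mp haa).1
    exact Finset.mem_erase.mpr ⟨neg_ne_zero.mpr ha, Finset.mem_univ _⟩
  · intro a _; simp
  · intro a _; simp
  · intro a _; rfl

lemma sum_lam_pow_le (hd2 : 2 ≤ d) {t : ℕ}
    (ht : 3 * d * Real.log d * (n : ℝ) ^ 2 - 1 ≤ (t : ℝ)) :
    ∑ k ∈ Finset.univ.erase (0 : Fin d → ZMod n), (lam d n k) ^ t ≤ 1 / 4 := by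
  have hd : 0 < d := lt_of_lt_of_le (by norm_num) hd2
  have hd0 : (0 : ℝ) < d := by exact_mod_cast hd
  have hd2r : (2 : ℝ) ≤ d := by exact_mod_cast hd2
  set r : ℝ := (((d : ℝ) ^ 12)⁻¹) with hrdef
  have hr0 : 0 ≤ r := by positivity
  have hrsmall : r ≤ ((2 : ℝ) ^ 12)⁻¹ := by
    rw [hrdef]
    exact inv_anti₀ (by positivity) (pow_le_pow_left₀ (by norm_num) hd2r 12)
  have hr1 : r < 1 := lt_of_le_of_lt hrsmall (by norm_num)
  set h : ZMod n → ℝ := fun a =>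
    Real.exp (-((t : ℝ) * (1 - Real.cos (2 * Real.pi * a.val / n)) / (2 * d))) with hhdef
  have h0 : h 0 = 1 := by
    rw [hhdef]
    simp [ZMod.val_zero]
  have hpos : ∀ a, 0 ≤ h a := fun a => le_of_lt (Real.exp_pos _)
  -- step 1 : lam ^ t ≤ ∏ h
  have step1 : ∀ k : Fin d → ZMod n, (lam d n k) ^ t ≤ ∏ i : Fin d, h (k i) := by
    intro k
    have pe : Real.exp ((t : ℝ) * (lam d n k - 1)) = ∏ i : Fin d, h (k i) := by
      rw [← Real.exp_sum]
      congr 1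
      have e1 : ∀ i ∈ Finset.univ (α := Fin d),
          -((t : ℝ) * (1 - Real.cos (2 * Real.pi * ((k i)).val / n)) / (2 * d))
            = (t : ℝ) * Real.cos (2 * Real.pi * ((k i)).val / n) / (2 * d) - (t : ℝ) / (2 * d) := by
        intro i _
        field_simp
        ring
      rw [Finset.sum_congr rfl e1, Finset.sum_sub_distrib, Finset.sum_const,
        Finset.card_univ, Fintype.card_fin, nsmul_eq_mul]
      have e2 : ∀ i ∈ Finset.univ (α := Fin d),
          (t : ℝ) * Real.cos (2 * Real.pi * ((k i)).val / n) / (2 * d)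
            = ((t : ℝ) / (2 * d)) * Real.cos (2 * Real.pi * ((k i)).val / n) := by
        intro i _
        ring
      rw [Finset.sum_congr rfl e2, ← Finset.mul_sum, lam]
      field_simp
      ring
    calc (lam d n k) ^ t ≤ (Real.exp (lam d n k - 1)) ^ t := by
          refine pow_le_pow_left₀ (lam_nonneg hd k) ?_ t
          linarith [Real.add_one_le_exp (lam d n k - 1)]
      _ = Real.exp ((t : ℝ) * (lam d n k - 1)) := (Real.exp_nat_mul _ t).symm
      _ = ∏ i : Fin d, h (k i) := pe
  -- step 3 : per-coordinate sum bound
  have step3 : ∑ a : ZMod n, h a ≤ 1 + 5 * r := by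
    rw [← Finset.add_sum_erase Finset.univ h (Finset.mem_univ (0 : ZMod n)), h0]
    have hinv : (1 - r)⁻¹ ≤ 5 / 4 := by
      have h45 : (4 : ℝ) / 5 ≤ 1 - r := by
        have : r ≤ 1 / 5 := le_trans hrsmall (by norm_num)
        linarith
      calc (1 - r)⁻¹ ≤ ((4 : ℝ) / 5)⁻¹ := inv_anti₀ (by norm_num) h45
        _ = 5 / 4 := by norm_num
    have hb : ∀ a ∈ Finset.univ.erase (0 : ZMod n),
        h a ≤ 2 * (r ^ a.val + r ^ (-a).val) := by
      intro a haa
      have ha : a ≠ 0 := (Finset.mem_erase.mp haa).1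
      have hcb := coord_bound hd2 ht ha
      rw [hhdef]
      refine le_trans hcb ?_
      have hneg : (-a).val = n - a.val := by
        haveI : NeZero a := ⟨ha⟩
        exact ZMod.val_neg_of_ne_zero a
      rw [hneg]
      rcases min_choice a.val (n - a.val) with hmin | hmin <;> rw [hmin] <;>
        nlinarith [pow_nonneg hr0 a.val, pow_nonneg hr0 (n - a.val)]
    have hmain : ∑ a ∈ Finset.univ.erase (0 : ZMod n), h a ≤ 5 * r := by
      calc ∑ a ∈ Finset.univ.erase (0 : ZMod n), h a
        ≤ ∑ a ∈ Finset.univ.erase (0 : ZMod n), 2 * (r ^ a.val + r ^ (-a).val) :=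
          Finset.sum_le_sum hb
        _ = 2 * (∑ a ∈ Finset.univ.erase (0 : ZMod n), r ^ a.val
            + ∑ a ∈ Finset.univ.erase (0 : ZMod n), r ^ (-a).val) := by
          rw [← Finset.sum_add_distrib, Finset.mul_sum]
        _ = 4 * ∑ a ∈ Finset.univ.erase (0 : ZMod n), r ^ a.val := by
          rw [neg_val_sum]
          ring
        _ ≤ 4 * (r * (1 - r)⁻¹) :=
          mul_le_mul_of_nonneg_left (geo_bound hr0 hr1) (by norm_num)
        _ ≤ 4 * (r * (5 / 4)) :=
          mul_le_mul_of_nonneg_left (mul_le_mul_of_nonneg_left hinv hr0) (by norm_num)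
        _ = 5 * r := by ring
    linarith
  -- step 2 + 4 : assemble
  have hS0 : 0 ≤ ∑ a : ZMod n, h a := Finset.sum_nonneg fun a _ => hpos a
  have step2 : ∑ k ∈ Finset.univ.erase (0 : Fin d → ZMod n), ∏ i : Fin d, h (k i)
      = (∑ a : ZMod n, h a) ^ d - 1 := by
    rw [Fintype.sum_pow h d]
    rw [← Finset.add_sum_erase Finset.univ (fun p : Fin d → ZMod n => ∏ i, h (p i))
      (Finset.mem_univ (0 : Fin d → ZMod n))]
    have : ∏ i : Fin d, h ((0 : Fin d → ZMod n) i) = 1 := by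
      simp [h0]
    rw [this]
    ring
  have hx : (d : ℝ) * (5 * r) ≤ 5 / 2048 := by
    have hpow : (2048 : ℝ) ≤ (d : ℝ) ^ 11 := by
      calc (2048 : ℝ) = 2 ^ 11 := by norm_num
        _ ≤ (d : ℝ) ^ 11 := pow_le_pow_left₀ (by norm_num) hd2r 11
    have e : (d : ℝ) * (5 * r) = 5 * ((d : ℝ) ^ 11)⁻¹ := by
      rw [hrdef]
      field_simp
    rw [e, div_eq_mul_inv]
    exact mul_le_mul_of_nonneg_left (inv_anti₀ (by norm_num) hpow) (by norm_num)
  have hfin : (∑ a : ZMod n, h a) ^ d ≤ 5 / 4 := by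
    calc (∑ a : ZMod n, h a) ^ d ≤ (1 + 5 * r) ^ d := pow_le_pow_left₀ hS0 step3 d
      _ ≤ (Real.exp (5 * r)) ^ d := by
          refine pow_le_pow_left₀ (by positivity) ?_ d
          linarith [Real.add_one_le_exp (5 * r)]
      _ = Real.exp ((d : ℝ) * (5 * r)) := (Real.exp_nat_mul _ d).symm
      _ ≤ Real.exp (5 / 2048) := Real.exp_le_exp.mpr hx
      _ ≤ (1 - 5 / 2048)⁻¹ := exp_le_inv_one_sub (by norm_num)
      _ ≤ 5 / 4 := by norm_num
  calc ∑ k ∈ Finset.univ.erase (0 : Fin d → ZMod n), (lam d n k) ^ t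
      ≤ ∑ k ∈ Finset.univ.erase (0 : Fin d → ZMod n), ∏ i : Fin d, h (k i) :=
        Finset.sum_le_sum fun k _ => step1 k
    _ = (∑ a : ZMod n, h a) ^ d - 1 := step2
    _ ≤ 1 / 4 := by linarith

lemma upd_iff (x y : Fin d → ZMod n) (i : Fin d) (c : ZMod n) :
    y = Function.update x i (x i + c) ↔ y - x = Function.update (0 : Fin d → ZMod n) i c := by
  rw [funext_iff, funext_iff]
  refine forall_congr' fun j => ?_
  by_cases hj : j = i
  · subst hj
    rw [Function.update_self, Function.update_self, Pi.sub_apply]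
    exact sub_eq_iff_eq_add'.symm
  · rw [Function.update_of_ne hj, Function.update_of_ne hj, Pi.sub_apply, Pi.zero_apply]
    exact sub_eq_zero.symm

end TorusMix

/-- For lazy random walk on the `d`-dimensional torus `(ℤ/nℤ)^d` with `d ≥ 2`, the total
variation mixing time satisfies `t_mix ≤ 3 d (log d) n²`: there is a time `t` at most
`3 d (log d) n²` at which the walk is within total variation distance `1/4` of the uniform
stationary distribution, from every starting state. -/
theorem torus_mixing (d n : ℕ) (hd : 2 ≤ d) [NeZero n]
    (P : Matrix (Fin d → ZMod n) (Fin d → ZMod n) ℝ)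
    (hP : ∀ x y, P x y = (1 / 2) * (if y = x then 1 else 0)
        + ∑ i : Fin d,
          ((1 / (4 * (d : ℝ))) * (if y = Function.update x i (x i + 1) then 1 else 0)
            + (1 / (4 * (d : ℝ))) * (if y = Function.update x i (x i - 1) then 1 else 0))) :
    ∃ t : ℕ, (t : ℝ) ≤ 3 * d * Real.log d * n ^ 2 ∧
      ∀ x : Fin d → ZMod n,
        (Finset.univ.sup' ⟨∅, Finset.mem_univ _⟩
          fun A : Finset (Fin d → ZMod n) =>
            |∑ y ∈ A, (P ^ t) x y - ∑ y ∈ A, ((n : ℝ))⁻¹ ^ d|) ≤ 1 / 4 := by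
  have hd0 : 0 < d := lt_of_lt_of_le (by norm_num) hd
  have hL : 0 ≤ Real.log d := Real.log_nonneg (by exact_mod_cast le_trans (by norm_num) hd)
  have hB0 : 0 ≤ 3 * (d : ℝ) * Real.log d * (n : ℝ) ^ 2 := by
    have : (0:ℝ) ≤ (d:ℝ) := Nat.cast_nonneg d
    positivity
  refine ⟨⌊3 * (d : ℝ) * Real.log d * (n : ℝ) ^ 2⌋₊, Nat.floor_le hB0, ?_⟩
  set t := ⌊3 * (d : ℝ) * Real.log d * (n : ℝ) ^ 2⌋₊ with htdef
  have ht : 3 * (d : ℝ) * Real.log d * (n : ℝ) ^ 2 - 1 ≤ (t : ℝ) := by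
    have := Nat.lt_floor_add_one (3 * (d : ℝ) * Real.log d * (n : ℝ) ^ 2)
    rw [← htdef] at this
    linarith
  have hP' : ∀ x y, P x y = TorusMix.ker d n (y - x) := by
    intro x y
    rw [hP, TorusMix.ker]
    have c0 : (y = x) ↔ (y - x = 0) := sub_eq_zero.symm
    rw [if_congr c0 rfl rfl]
    congr 1
    refine Finset.sum_congr rfl fun i _ => ?_
    have e1 : x i - 1 = x i + (-1) := sub_eq_add_neg _ _
    rw [if_congr (TorusMix.upd_iff x y i 1) rfl rfl, e1,
      if_congr (TorusMix.upd_iff x y i (-1)) rfl rfl]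
  have hsum := TorusMix.sum_lam_pow_le (n := n) hd ht
  have hnd : (0 : ℝ) < (n : ℝ) ^ d := by
    have : 0 < n := Nat.pos_of_ne_zero (NeZero.ne n)
    positivity
  intro x
  refine Finset.sup'_le _ _ fun A _ => ?_
  have hdev : ∀ y : Fin d → ZMod n,
      |(P ^ t) x y - ((n : ℝ) ^ d)⁻¹| ≤ ((n : ℝ) ^ d)⁻¹ * (1 / 4) := fun y =>
    le_trans (TorusMix.dev_bound hd0 P hP' t x y)
      (mul_le_mul_of_nonneg_left hsum (by positivity))
  calc |∑ y ∈ A, (P ^ t) x y - ∑ y ∈ A, ((n : ℝ))⁻¹ ^ d|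
      = |∑ y ∈ A, ((P ^ t) x y - ((n : ℝ) ^ d)⁻¹)| := by
        rw [Finset.sum_sub_distrib]
        congr 2
        refine Finset.sum_congr rfl fun y _ => ?_
        rw [inv_pow]
    _ ≤ ∑ y ∈ A, |(P ^ t) x y - ((n : ℝ) ^ d)⁻¹| := Finset.abs_sum_le_sum_abs _ _
    _ ≤ ∑ y ∈ A, ((n : ℝ) ^ d)⁻¹ * (1 / 4) := Finset.sum_le_sum fun y _ => hdev y
    _ ≤ ∑ _y ∈ (Finset.univ : Finset (Fin d → ZMod n)), ((n : ℝ) ^ d)⁻¹ * (1 / 4) :=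
        Finset.sum_le_sum_of_subset_of_nonneg (Finset.subset_univ A)
          (fun y _ _ => by positivity)
    _ = 1 / 4 := by
        rw [Finset.sum_const, Finset.card_univ]
        have hcard : Fintype.card (Fin d → ZMod n) = n ^ d := by
          rw [Fintype.card_fun, ZMod.card, Fintype.card_fin]
        rw [hcard, nsmul_eq_mul]
        push_cast
        rw [← mul_assoc, mul_inv_cancel₀ (by positivity), one_mul]
end

section
/- For a reversible Markov chain on a finite state space, s_x(2t) ≤ 4 d(t), where s_x is the separation distance from x and d(t) = max_y ‖P^t(y,·) − π‖_TV. -/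
open Finset

private lemma pow_entry_nonneg {S : Type*} [Fintype S] [DecidableEq S]
    (P : Matrix S S ℝ) (hP0 : ∀ a b, 0 ≤ P a b) :
    ∀ n a b, 0 ≤ (P ^ n) a b := by
  intro n
  induction n with
  | zero => intro a b; by_cases h : a = b <;> simp [Matrix.one_apply, h]
  | succ n ih =>
    intro a b
    rw [pow_succ, Matrix.mul_apply]
    exact Finset.sum_nonneg fun c _ => mul_nonneg (ih a c) (hP0 c b)

private lemma pow_row_sum {S : Type*} [Fintype S] [DecidableEq S]
    (P : Matrix S S ℝ) (hP1 : ∀ a, ∑ b, P a b = 1) :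
    ∀ n a, ∑ b, (P ^ n) a b = 1 := by
  intro n
  induction n with
  | zero => intro a; simp [Matrix.one_apply]
  | succ n ih =>
    intro a
    simp only [pow_succ, Matrix.mul_apply]
    rw [Finset.sum_comm]
    simp only [← Finset.mul_sum, hP1, mul_one]
    exact ih a

private lemma pow_rev {S : Type*} [Fintype S] [DecidableEq S]
    (P : Matrix S S ℝ) (π : S → ℝ)
    (hrev : ∀ a b, π a * P a b = π b * P b a) :
    ∀ n a b, π a * (P ^ n) a b = π b * (P ^ n) b a := by
  intro n
  induction n with
  | zero =>
    intro a b
    by_cases h : a = b <;> simp [Matrix.one_apply, h, Matrix.one_apply_ne, Ne.symm]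
  | succ n ih =>
    intro a b
    conv_lhs => rw [pow_succ]
    conv_rhs => rw [pow_succ']
    rw [Matrix.mul_apply, Matrix.mul_apply, Finset.mul_sum, Finset.mul_sum]
    refine Finset.sum_congr rfl fun c _ => ?_
    calc π a * ((P ^ n) a c * P c b) = (π a * (P ^ n) a c) * P c b := by ring
      _ = (π c * (P ^ n) c a) * P c b := by rw [ih]
      _ = (π c * P c b) * (P ^ n) c a := by ring
      _ = (π b * P b c) * (P ^ n) c a := by rw [hrev]
      _ = π b * (P b c * (P ^ n) c a) := by ring

/-- For a reversible Markov chain on a finite state space, `s_x(2t) ≤ 4 d(t)`, where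
`s_x(t) = max_y (1 − P^t(x,y)/π(y))` is the separation distance and
`d(t) = max_y ‖P^t(y,·) − π‖_TV`. -/
theorem sep_two_t_le_four_d {S : Type*} [Fintype S] [DecidableEq S] [Nonempty S]
    (P : Matrix S S ℝ) (hP0 : ∀ a b, 0 ≤ P a b) (hP1 : ∀ a, ∑ b, P a b = 1)
    (π : S → ℝ) (hπpos : ∀ y, 0 < π y) (hπ1 : ∑ y, π y = 1)
    (hrev : ∀ a b, π a * P a b = π b * P b a) (x : S) (t : ℕ) :
    (Finset.univ.sup' Finset.univ_nonempty fun y : S => 1 - (P ^ (2 * t)) x y / π y)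
      ≤ 4 * Finset.univ.sup' Finset.univ_nonempty (fun z : S =>
          Finset.univ.sup' ⟨∅, Finset.mem_univ _⟩
            fun A : Finset S => |∑ y ∈ A, (P ^ t) z y - ∑ y ∈ A, π y|) := by
  set d : ℝ := Finset.univ.sup' Finset.univ_nonempty (fun z : S =>
      Finset.univ.sup' ⟨∅, Finset.mem_univ _⟩
        fun A : Finset S => |∑ y ∈ A, (P ^ t) z y - ∑ y ∈ A, π y|) with hd
  have hdbound : ∀ (z : S) (A : Finset S), |∑ y ∈ A, (P ^ t) z y - ∑ y ∈ A, π y| ≤ d := by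
    intro z A
    refine le_trans
      (Finset.le_sup' (fun A : Finset S => |∑ y ∈ A, (P ^ t) z y - ∑ y ∈ A, π y|)
        (Finset.mem_univ A)) ?_
    exact Finset.le_sup' (fun z : S => Finset.univ.sup' ⟨∅, Finset.mem_univ _⟩
      fun A : Finset S => |∑ y ∈ A, (P ^ t) z y - ∑ y ∈ A, π y|) (Finset.mem_univ z)
  have hd0 : 0 ≤ d := by
    have := hdbound (Classical.arbitrary S) ∅
    simpa using this
  apply Finset.sup'_le
  intro y _
  set a : S → ℝ := fun z => (P ^ t) x z with ha
  set b : S → ℝ := fun z => (P ^ t) y z with hb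
  have ha0 : ∀ z, 0 ≤ a z := fun z => pow_entry_nonneg P hP0 t x z
  have hb0 : ∀ z, 0 ≤ b z := fun z => pow_entry_nonneg P hP0 t y z
  have hasum : ∑ z, a z = 1 := pow_row_sum P hP1 t x
  -- the ratio identity
  have hratio : (P ^ (2 * t)) x y / π y = ∑ z, a z * b z / π z := by
    have h2t : (P ^ (2 * t)) x y = ∑ z, a z * (P ^ t) z y := by
      rw [two_mul, pow_add, Matrix.mul_apply]
    have hrevz : ∀ z, (P ^ t) z y = π y * b z / π z := by
      intro z
      have h := pow_rev P π hrev t z y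
      rw [hb, eq_div_iff (hπpos z).ne']
      linarith
    rw [h2t]
    rw [Finset.sum_div]
    refine Finset.sum_congr rfl fun z _ => ?_
    rw [hrevz z]
    field_simp [(hπpos y).ne', (hπpos z).ne']
  set m : ℝ := ∑ z, min (a z) (b z) with hm
  have hm0 : 0 ≤ m := Finset.sum_nonneg fun z _ => le_min (ha0 z) (hb0 z)
  -- Cauchy-Schwarz: m^2 ≤ ∑ a b / π
  have hCS : m ^ 2 ≤ ∑ z, a z * b z / π z := by
    have key : (∑ z, Real.sqrt (π z) * (min (a z) (b z) / Real.sqrt (π z))) ^ 2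
        ≤ (∑ z, Real.sqrt (π z) ^ 2) * ∑ z, (min (a z) (b z) / Real.sqrt (π z)) ^ 2 :=
      Finset.sum_mul_sq_le_sq_mul_sq _ _ _
    have hsq : ∀ z : S, Real.sqrt (π z) ≠ 0 := fun z =>
      ne_of_gt (Real.sqrt_pos.mpr (hπpos z))
    have h1 : ∀ z : S, Real.sqrt (π z) * (min (a z) (b z) / Real.sqrt (π z))
        = min (a z) (b z) := fun z => by
      rw [mul_comm, div_mul_cancel₀ _ (hsq z)]
    have h2 : ∑ z, Real.sqrt (π z) ^ 2 = 1 := by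
      rw [← hπ1]; exact Finset.sum_congr rfl fun z _ => Real.sq_sqrt (hπpos z).le
    have h3 : ∀ z : S, (min (a z) (b z) / Real.sqrt (π z)) ^ 2
        = min (a z) (b z) ^ 2 / π z := fun z => by
      rw [div_pow, Real.sq_sqrt (hπpos z).le]
    simp only [h1, h2, h3, one_mul] at key
    refine le_trans key (Finset.sum_le_sum fun z _ => ?_)
    have hmin2 : min (a z) (b z) ^ 2 ≤ a z * b z := by
      rw [sq]
      exact mul_le_mul (min_le_left _ _) (min_le_right _ _)
        (le_min (ha0 z) (hb0 z)) (ha0 z)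
    gcongr
    exact (hπpos z).le
  -- m ≥ 1 - 2d
  have hm_ge : 1 - 2 * d ≤ m := by
    set A : Finset S := Finset.univ.filter (fun z => b z < a z) with hA
    have hsplit : ∑ z, (a z - min (a z) (b z)) = ∑ z ∈ A, (a z - b z) := by
      rw [← Finset.sum_filter_add_sum_filter_not Finset.univ (fun z => b z < a z)]
      have h1 : ∑ z ∈ A, (a z - min (a z) (b z)) = ∑ z ∈ A, (a z - b z) := by
        refine Finset.sum_congr rfl fun z hz => ?_
        rw [hA, Finset.mem_filter] at hz
        rw [min_eq_right hz.2.le]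
      have h2 : ∑ z ∈ Finset.univ.filter (fun z => ¬ b z < a z), (a z - min (a z) (b z)) = 0 := by
        refine Finset.sum_eq_zero fun z hz => ?_
        rw [Finset.mem_filter] at hz
        rw [min_eq_left (not_lt.mp hz.2)]
        ring
      rw [h1, h2, add_zero]
    have hAd : ∑ z ∈ A, (a z - b z) ≤ 2 * d := by
      have e1 : ∑ z ∈ A, (a z - b z)
          = (∑ z ∈ A, a z - ∑ z ∈ A, π z) - (∑ z ∈ A, b z - ∑ z ∈ A, π z) := by
        rw [Finset.sum_sub_distrib]; ring
      have b1 := hdbound x A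
      have b2 := hdbound y A
      rw [e1]
      calc (∑ z ∈ A, a z - ∑ z ∈ A, π z) - (∑ z ∈ A, b z - ∑ z ∈ A, π z)
          ≤ |∑ z ∈ A, a z - ∑ z ∈ A, π z| + |∑ z ∈ A, b z - ∑ z ∈ A, π z| := by
            have := abs_le.mp (le_refl |∑ z ∈ A, b z - ∑ z ∈ A, π z|)
            have h1 := le_abs_self (∑ z ∈ A, a z - ∑ z ∈ A, π z)
            have h2 := neg_abs_le (∑ z ∈ A, b z - ∑ z ∈ A, π z)
            linarith
        _ ≤ d + d := add_le_add b1 b2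
        _ = 2 * d := by ring
    have : m = 1 - ∑ z, (a z - min (a z) (b z)) := by
      rw [hm, ← hasum, ← Finset.sum_sub_distrib]
      refine Finset.sum_congr rfl fun z _ => ?_
      ring
    rw [this, hsplit]
    linarith
  -- conclude
  have hratio_ge : m ^ 2 ≤ (P ^ (2 * t)) x y / π y := by rw [hratio]; exact hCS
  nlinarith [sq_nonneg (m - (1 - 2 * d)), sq_nonneg m, mul_nonneg hd0 hd0]
end

section
/- For reversible P with stationary distribution π, for all x, y and t: P^{2t}(x,y)/π(y) ≥ (Σ_z min(P^t(x,z), P^t(y,z)))² = (1 − ‖P^t(x,·) − P^t(y,·)‖_TV)². -/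
open Finset

section aux

variable {S : Type*} [Fintype S] [DecidableEq S] (P : Matrix S S ℝ)

lemma aux_pow_nonneg (hP0 : ∀ a b, 0 ≤ P a b) : ∀ t a b, 0 ≤ (P ^ t) a b := by
  intro t
  induction t with
  | zero => intro a b; simp [Matrix.one_apply]; split <;> norm_num
  | succ n ih =>
    intro a b
    rw [pow_succ, Matrix.mul_apply]
    exact Finset.sum_nonneg fun c _ => mul_nonneg (ih a c) (hP0 c b)

lemma aux_pow_rowsum (hP1 : ∀ a, ∑ b, P a b = 1) : ∀ t a, ∑ b, (P ^ t) a b = 1 := by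
  intro t
  induction t with
  | zero => intro a; simp [Matrix.one_apply]
  | succ n ih =>
    intro a
    simp only [pow_succ, Matrix.mul_apply]
    rw [Finset.sum_comm]
    simp_rw [← Finset.mul_sum, hP1, mul_one]
    exact ih a

lemma aux_pow_rev (π : S → ℝ) (hrev : ∀ a b, π a * P a b = π b * P b a) :
    ∀ t a b, π a * (P ^ t) a b = π b * (P ^ t) b a := by
  intro t
  induction t with
  | zero =>
    intro a b
    by_cases h : a = b
    · subst h; rfl
    · simp [Matrix.one_apply, h, Ne.symm h]
  | succ n ih =>
    intro a b
    nth_rewrite 1 [pow_succ']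
    rw [pow_succ, Matrix.mul_apply, Matrix.mul_apply, Finset.mul_sum, Finset.mul_sum]
    refine Finset.sum_congr rfl fun c _ => ?_
    calc π a * (P a c * (P ^ n) c b) = (π a * P a c) * (P ^ n) c b := by ring
      _ = (π c * P c a) * (P ^ n) c b := by rw [hrev]
      _ = (π c * (P ^ n) c b) * P c a := by ring
      _ = (π b * (P ^ n) b c) * P c a := by rw [ih]
      _ = π b * ((P ^ n) b c * P c a) := by ring

end aux

/-- For `P` reversible with respect to `π`:
`P^{2t}(x,y)/π(y) ≥ (∑_z min(P^t(x,z), P^t(y,z)))² = (1 − ‖P^t(x,·) − P^t(y,·)‖_TV)²`. -/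
theorem reversible_two_step_bound {S : Type*} [Fintype S] [DecidableEq S]
    (P : Matrix S S ℝ) (hP0 : ∀ a b, 0 ≤ P a b) (hP1 : ∀ a, ∑ b, P a b = 1)
    (π : S → ℝ) (hπpos : ∀ z, 0 < π z) (hπ1 : ∑ z, π z = 1)
    (hrev : ∀ a b, π a * P a b = π b * P b a) (x y : S) (t : ℕ) :
    (∑ z, min ((P ^ t) x z) ((P ^ t) y z)) ^ 2 ≤ (P ^ (2 * t)) x y / π y ∧
    (∑ z, min ((P ^ t) x z) ((P ^ t) y z))
      = 1 - (Finset.univ.sup' ⟨∅, Finset.mem_univ _⟩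
          fun A : Finset S => |∑ z ∈ A, (P ^ t) x z - ∑ z ∈ A, (P ^ t) y z|) := by
  set a : S → ℝ := fun z => (P ^ t) x z with ha
  set b : S → ℝ := fun z => (P ^ t) y z with hb
  have ha0 : ∀ z, 0 ≤ a z := fun z => aux_pow_nonneg P hP0 t x z
  have hb0 : ∀ z, 0 ≤ b z := fun z => aux_pow_nonneg P hP0 t y z
  have ha1 : ∑ z, a z = 1 := aux_pow_rowsum P hP1 t x
  have hb1 : ∑ z, b z = 1 := aux_pow_rowsum P hP1 t y
  constructor
  · -- Cauchy–Schwarz part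
    have key : (P ^ (2 * t)) x y / π y = ∑ z, a z * b z / π z := by
      have h2t : (P ^ (2 * t)) x y = ∑ z, a z * ((P ^ t) z y) := by
        rw [two_mul, pow_add, Matrix.mul_apply]
      rw [h2t, Finset.sum_div]
      refine Finset.sum_congr rfl fun z _ => ?_
      have h := aux_pow_rev P π hrev t z y
      rw [div_eq_div_iff (hπpos y).ne' (hπpos z).ne']
      calc a z * (P ^ t) z y * π z = a z * (π z * (P ^ t) z y) := by ring
        _ = a z * (π y * (P ^ t) y z) := by rw [h]
        _ = a z * b z * π y := by ring
    rw [key]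
    have cs : (∑ z, Real.sqrt (a z * b z)) ^ 2 ≤ (∑ z, π z) * ∑ z, a z * b z / π z := by
      refine Finset.sum_sq_le_sum_mul_sum_of_sq_eq_mul _ (fun z _ => (hπpos z).le)
        (fun z _ => div_nonneg (mul_nonneg (ha0 z) (hb0 z)) (hπpos z).le) (fun z _ => ?_)
      rw [Real.sq_sqrt (mul_nonneg (ha0 z) (hb0 z)), ← mul_div_assoc,
        mul_div_cancel_left₀ _ (hπpos z).ne']
    rw [hπ1, one_mul] at cs
    refine le_trans ?_ cs
    have hmin : ∀ z : S, min (a z) (b z) ≤ Real.sqrt (a z * b z) := by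
      intro z
      have h0 : 0 ≤ min (a z) (b z) := le_min (ha0 z) (hb0 z)
      have hsq : min (a z) (b z) ^ 2 ≤ a z * b z := by
        rw [sq]
        exact mul_le_mul (min_le_left _ _) (min_le_right _ _) h0 (ha0 z)
      exact (Real.le_sqrt h0 (mul_nonneg (ha0 z) (hb0 z))).mpr hsq
    have hs : (∑ z, min (a z) (b z)) ≤ ∑ z, Real.sqrt (a z * b z) :=
      Finset.sum_le_sum fun z _ => hmin z
    have hmn : 0 ≤ ∑ z, min (a z) (b z) :=
      Finset.sum_nonneg fun z _ => le_min (ha0 z) (hb0 z)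
    exact pow_le_pow_left₀ hmn hs 2
  · -- total variation part
    have hdsum : ∑ z, (a z - b z) = 0 := by rw [Finset.sum_sub_distrib, ha1, hb1]; ring
    have hminmax : ∀ z : S, min (a z) (b z) = a z - max (a z - b z) 0 := by
      intro z
      rcases le_total (a z) (b z) with h | h
      · rw [min_eq_left h, max_eq_right (by linarith)]; ring
      · rw [min_eq_right h, max_eq_left (by linarith)]; ring
    have hsum : ∑ z, min (a z) (b z) = 1 - ∑ z, max (a z - b z) 0 := by
      rw [Finset.sum_congr rfl fun z _ => hminmax z, Finset.sum_sub_distrib, ha1]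
    rw [hsum]
    congr 1
    -- show sup' = ∑ max (a - b) 0
    set T := ∑ z, max (a z - b z) 0 with hT
    refine (le_antisymm ?_ ?_).symm
    · -- sup' ≤ T
      refine Finset.sup'_le _ _ fun A _ => ?_
      rw [abs_le]
      constructor
      · have h1 : ∑ z ∈ A, (a z - b z) = - ∑ z ∈ Aᶜ, (a z - b z) := by
          have := Finset.sum_add_sum_compl A fun z => (a z - b z)
          rw [hdsum] at this; linarith
        have h2 : ∑ z ∈ Aᶜ, (a z - b z) ≤ T := by
          calc ∑ z ∈ Aᶜ, (a z - b z) ≤ ∑ z ∈ Aᶜ, max (a z - b z) 0 :=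
              Finset.sum_le_sum fun z _ => le_max_left _ _
            _ ≤ T := Finset.sum_le_sum_of_subset_of_nonneg (Finset.subset_univ _)
                (fun z _ _ => le_max_right _ _)
        rw [Finset.sum_sub_distrib] at h1
        linarith [h1, h2]
      · have h2 : ∑ z ∈ A, (a z - b z) ≤ T := by
          calc ∑ z ∈ A, (a z - b z) ≤ ∑ z ∈ A, max (a z - b z) 0 :=
              Finset.sum_le_sum fun z _ => le_max_left _ _
            _ ≤ T := Finset.sum_le_sum_of_subset_of_nonneg (Finset.subset_univ _)
                (fun z _ _ => le_max_right _ _)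
        rw [Finset.sum_sub_distrib] at h2
        linarith
    · -- T ≤ sup'
      set A := Finset.univ.filter (fun z => 0 ≤ a z - b z) with hA
      refine le_trans ?_ (Finset.le_sup' _ (Finset.mem_univ A))
      have hTA : T = ∑ z ∈ A, (a z - b z) := by
        rw [hT, ← Finset.sum_filter_add_sum_filter_not Finset.univ
          (fun z => 0 ≤ a z - b z) (fun z => max (a z - b z) 0)]
        have e1 : ∑ z ∈ A, max (a z - b z) 0 = ∑ z ∈ A, (a z - b z) := by
          refine Finset.sum_congr rfl fun z hz => ?_
          rw [hA, Finset.mem_filter] at hz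
          exact max_eq_left hz.2
        have e2 : ∑ z ∈ Finset.univ.filter (fun z => ¬ 0 ≤ a z - b z),
            max (a z - b z) 0 = 0 := by
          refine Finset.sum_eq_zero fun z hz => ?_
          rw [Finset.mem_filter] at hz
          exact max_eq_right (by linarith [not_le.mp hz.2])
        rw [e1, e2, add_zero]
      rw [← Finset.sum_sub_distrib, ← hTA]
      exact le_abs_self T
end

section
/- For a reversible, irreducible, aperiodic finite Markov chain, |λ₂|^t ≤ 2 d(t) for all t, where λ₂ is the second largest eigenvalue of P in absolute value among the non-unit eigenvalues and d(t) = max_x ‖P^t(x,·) − π‖_TV. -/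
/-- For a reversible, irreducible, aperiodic finite Markov chain with stationary distribution
`π`, any eigenvalue `λ ≠ 1` of `P` satisfies `|λ|^t ≤ 2 d(t)` for all `t`, where
`d(t) = max_x ‖P^t(x,·) − π‖_TV`. -/
theorem eigenvalue_le_two_d {S : Type*} [Fintype S] [DecidableEq S] [Nonempty S]
    (P : Matrix S S ℝ) (hP0 : ∀ a b, 0 ≤ P a b) (hP1 : ∀ a, ∑ b, P a b = 1)
    (π : S → ℝ) (hπpos : ∀ y, 0 < π y) (hπ1 : ∑ y, π y = 1)
    (hrev : ∀ a b, π a * P a b = π b * P b a)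
    (hprim : ∃ t : ℕ, ∀ a b, 0 < (P ^ t) a b)
    (lam : ℝ) (heig : ∃ f : S → ℝ, f ≠ 0 ∧ P.mulVec f = lam • f) (hlam : lam ≠ 1)
    (t : ℕ) :
    |lam| ^ t ≤ 2 * Finset.univ.sup' Finset.univ_nonempty (fun x : S =>
        Finset.univ.sup' ⟨∅, Finset.mem_univ _⟩
          fun A : Finset S => |∑ y ∈ A, (P ^ t) x y - ∑ y ∈ A, π y|) := by
  obtain ⟨f, hf0, hf⟩ := heig
  -- row sums of powers are 1
  have hrow : ∀ n : ℕ, ∀ a, ∑ b, (P ^ n) a b = 1 := by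
    intro n
    induction n with
    | zero => intro a; simp [Matrix.one_apply]
    | succ n ih =>
      intro a
      rw [pow_succ]
      simp only [Matrix.mul_apply]
      rw [Finset.sum_comm]
      simp only [← Finset.mul_sum]
      simp [hP1, ih a]
  -- eigenfunction for powers
  have heigt : (P ^ t).mulVec f = (lam ^ t) • f := by
    induction t with
    | zero => simp [Matrix.one_mulVec]
    | succ n ih =>
      rw [pow_succ, ← Matrix.mulVec_mulVec, hf, Matrix.mulVec_smul, ih, smul_smul,
        pow_succ, mul_comm]
  -- orthogonality
  have horth : ∑ y, π y * f y = 0 := by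
    have h2 : ∑ y, π y * (P.mulVec f y) = ∑ y, π y * f y := by
      simp only [Matrix.mulVec, dotProduct, Finset.mul_sum]
      rw [Finset.sum_comm]
      have : ∀ b : S, ∑ y, π y * (P y b * f b) = π b * f b := by
        intro b
        have : ∀ y, π y * (P y b * f b) = (π b * P b y) * f b := by
          intro y; rw [← mul_assoc, hrev y b]
        rw [Finset.sum_congr rfl fun y _ => this y, ← Finset.sum_mul,
          ← Finset.mul_sum, hP1 b, mul_one]
      simp [this]
    have h1 : ∑ y, π y * (P.mulVec f y) = lam * ∑ y, π y * f y := by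
      rw [hf]; simp only [Pi.smul_apply, smul_eq_mul, Finset.mul_sum]
      exact Finset.sum_congr rfl fun y _ => by ring
    have := h1.symm.trans h2
    have hsub : (lam - 1) * ∑ y, π y * f y = 0 := by ring_nf; linarith [this]
    rcases mul_eq_zero.mp hsub with h | h
    · exact absurd (by linarith : lam = 1) hlam
    · exact h
  -- choose maximizer of |f|
  obtain ⟨x, -, hx⟩ := Finset.exists_max_image Finset.univ (fun y => |f y|)
    ⟨Classical.arbitrary S, Finset.mem_univ _⟩
  have hfx : 0 < |f x| := by
    obtain ⟨y, hy⟩ := Function.ne_iff.mp hf0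
    exact lt_of_lt_of_le (abs_pos.mpr hy) (hx y (Finset.mem_univ y))
  set g : S → ℝ := fun y => (P ^ t) x y - π y with hg
  have hgsum : ∑ y, g y = 0 := by simp [hg, Finset.sum_sub_distrib, hrow t x, hπ1]
  -- |lam|^t * |f x| ≤ (∑ |g|) * |f x|
  have hkey : |lam| ^ t * |f x| ≤ (∑ y, |g y|) * |f x| := by
    have h1 : lam ^ t * f x = ∑ y, g y * f y := by
      have := congrFun heigt x
      simp only [Matrix.mulVec, dotProduct, Pi.smul_apply, smul_eq_mul] at this
      rw [← this]
      simp only [hg, sub_mul]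
      rw [Finset.sum_sub_distrib, horth, sub_zero]
    have h2 : |lam ^ t * f x| ≤ ∑ y, |g y * f y| := h1 ▸ Finset.abs_sum_le_sum_abs _ _
    rw [abs_mul, abs_pow] at h2
    refine h2.trans ?_
    rw [Finset.sum_mul]
    refine Finset.sum_le_sum fun y _ => ?_
    rw [abs_mul]
    exact mul_le_mul_of_nonneg_left (hx y (Finset.mem_univ y)) (abs_nonneg _)
  -- ∑ |g| ≤ 2 * D
  set D := Finset.univ.sup' Finset.univ_nonempty (fun x : S =>
        Finset.univ.sup' ⟨∅, Finset.mem_univ _⟩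
          fun A : Finset S => |∑ y ∈ A, (P ^ t) x y - ∑ y ∈ A, π y|) with hD
  have hgD : ∑ y, |g y| ≤ 2 * D := by
    set A : Finset S := Finset.univ.filter (fun y => 0 ≤ g y) with hA
    have hsplit : ∑ y, |g y| = 2 * ∑ y ∈ A, g y := by
      have h1 : ∑ y ∈ A, g y + ∑ y ∈ Finset.univ.filter (fun y => ¬ 0 ≤ g y), g y = 0 := by
        rw [Finset.sum_filter_add_sum_filter_not]; exact hgsum
      have h2 : ∑ y, |g y| = ∑ y ∈ A, g y
          + ∑ y ∈ Finset.univ.filter (fun y => ¬ 0 ≤ g y), (-g y) := by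
        rw [← Finset.sum_filter_add_sum_filter_not Finset.univ (fun y => 0 ≤ g y)]
        congr 1
        · exact Finset.sum_congr rfl fun y hy => abs_of_nonneg (Finset.mem_filter.mp hy).2
        · exact Finset.sum_congr rfl fun y hy =>
            abs_of_neg (lt_of_not_ge (Finset.mem_filter.mp hy).2)
      rw [h2, Finset.sum_neg_distrib]
      linarith [h1]
    rw [hsplit]
    have : ∑ y ∈ A, g y ≤ D := by
      have h3 : ∑ y ∈ A, g y ≤ |∑ y ∈ A, (P ^ t) x y - ∑ y ∈ A, π y| := by
        rw [← Finset.sum_sub_distrib]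
        exact le_abs_self _
      refine h3.trans ?_
      refine le_trans (Finset.le_sup' (fun B : Finset S =>
        |∑ y ∈ B, (P ^ t) x y - ∑ y ∈ B, π y|) (Finset.mem_univ A)) ?_
      exact Finset.le_sup' (fun x : S => Finset.univ.sup' ⟨∅, Finset.mem_univ _⟩
        fun A : Finset S => |∑ y ∈ A, (P ^ t) x y - ∑ y ∈ A, π y|) (Finset.mem_univ x)
    linarith
  have : |lam| ^ t * |f x| ≤ 2 * D * |f x| :=
    hkey.trans (mul_le_mul_of_nonneg_right hgD (abs_nonneg _))
  exact le_of_mul_le_mul_right this hfx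
end

section
/- Let P be the transition matrix of simple random walk on a finite Cayley graph of a group G with symmetric generating set S of size d, and let λ be the second largest eigenvalue of P. If n ≤ 1/(1−λ), then E[ρ(X_0, X_n)²] ≥ n/(2d), where ρ is the graph distance. Consequently the relaxation time satisfies t_rel = 1/(1−λ) ≤ 2d·diam(G)². -/
set_option linter.unusedSectionVars false
open Finset

section
variable {G : Type*} [Group G] [Fintype G] [DecidableEq G]
variable (S : Finset G) (P : Matrix G G ℝ)

lemma mylem_symm (hsym : ∀ s ∈ S, s⁻¹ ∈ S)
    (hP : ∀ x y, P x y = ((S.filter fun s => x * s = y).card : ℝ) / S.card)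
    (x y : G) : P x y = P y x := by
  rw [hP, hP]
  congr 2
  apply Finset.card_bij (fun s _ => s⁻¹)
  · rintro s hs
    simp only [Finset.mem_filter] at hs ⊢
    refine ⟨hsym s hs.1, ?_⟩
    rw [← hs.2]; group
  · intro a ha b hb hab; simpa using congrArg (·⁻¹) hab
  · intro b hb
    simp only [Finset.mem_filter] at hb
    refine ⟨b⁻¹, ?_, by simp⟩
    simp only [Finset.mem_filter]
    refine ⟨hsym b hb.1, ?_⟩
    rw [← hb.2]; group

lemma mylem_rowsum (hS : S.Nonempty)
    (hP : ∀ x y, P x y = ((S.filter fun s => x * s = y).card : ℝ) / S.card)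
    (x : G) : ∑ y, P x y = 1 := by
  have h : ∑ y, ((S.filter fun s => x * s = y).card : ℝ) = S.card := by
    rw [← Nat.cast_sum]
    norm_cast
    rw [← Finset.card_eq_sum_card_fiberwise (f := fun s => x * s) (t := univ)]
    intro s _; exact mem_univ _
  simp only [hP, ← Finset.sum_div, h]
  exact div_self (by exact_mod_cast hS.card_pos.ne')

lemma mylem_nonneg
    (hP : ∀ x y, P x y = ((S.filter fun s => x * s = y).card : ℝ) / S.card)
    (x y : G) : 0 ≤ P x y := by
  rw [hP]; positivity

end

section
variable {G : Type*} [Group G] [Fintype G] [DecidableEq G]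
variable (S : Finset G) (P : Matrix G G ℝ)

lemma mylem_action (hP : ∀ x y, P x y = ((S.filter fun s => x * s = y).card : ℝ) / S.card)
    (x : G) (h : G → ℝ) : ∑ y, P x y * h y = (∑ s ∈ S, h (x * s)) / S.card := by
  have key : ∑ s ∈ S, h (x * s) = ∑ y, ((S.filter fun s => x * s = y).card : ℝ) * h y := by
    rw [← Finset.sum_fiberwise_of_maps_to (g := fun s => x * s) (t := univ)
      (fun s _ => mem_univ _) (fun s => h (x * s))]
    refine Finset.sum_congr rfl fun y _ => ?_
    rw [Finset.sum_congr rfl (g := fun _ => h y) (fun s hs =>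
      by rw [(Finset.mem_filter.mp hs).2]), Finset.sum_const, nsmul_eq_mul]
  rw [key, Finset.sum_div]
  refine Finset.sum_congr rfl fun y _ => ?_
  rw [hP]; ring

lemma mylem_pow_nonneg (hP : ∀ x y, P x y = ((S.filter fun s => x * s = y).card : ℝ) / S.card)
    (n : ℕ) (x y : G) : 0 ≤ (P ^ n) x y := by
  induction n generalizing x y with
  | zero => simp [Matrix.one_apply]; positivity
  | succ n ih =>
    rw [pow_succ, Matrix.mul_apply]
    exact Finset.sum_nonneg fun z _ => mul_nonneg (ih x z) (mylem_nonneg S P hP z y)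

lemma mylem_pow_rowsum (hS : S.Nonempty)
    (hP : ∀ x y, P x y = ((S.filter fun s => x * s = y).card : ℝ) / S.card)
    (n : ℕ) (x : G) : ∑ y, (P ^ n) x y = 1 := by
  induction n generalizing x with
  | zero => simp [Matrix.one_apply]
  | succ n ih =>
    simp only [pow_succ, Matrix.mul_apply]
    rw [Finset.sum_comm]
    calc ∑ z, ∑ y, (P ^ n) x z * P z y
        = ∑ z, (P ^ n) x z * ∑ y, P z y := by simp [Finset.mul_sum]
      _ = 1 := by simp only [mylem_rowsum S P hS hP]; simpa using ih x

lemma mylem_pow_symm (hsym : ∀ s ∈ S, s⁻¹ ∈ S)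
    (hP : ∀ x y, P x y = ((S.filter fun s => x * s = y).card : ℝ) / S.card)
    (n : ℕ) (x y : G) : (P ^ n) x y = (P ^ n) y x := by
  have hT : P.transpose = P := by
    ext a b; simp [Matrix.transpose_apply, mylem_symm S P hsym hP]
  have : (P ^ n).transpose = P ^ n := by rw [Matrix.transpose_pow, hT]
  conv_lhs => rw [← this]
  rfl

lemma mylem_shift (hP : ∀ x y, P x y = ((S.filter fun s => x * s = y).card : ℝ) / S.card)
    (n : ℕ) (g x y : G) : (P ^ n) (g * x) (g * y) = (P ^ n) x y := by
  induction n generalizing x y with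
  | zero => simp [Matrix.one_apply]
  | succ n ih =>
    simp only [pow_succ, Matrix.mul_apply]
    rw [← Equiv.sum_comp (Equiv.mulLeft g) (fun z => (P ^ n) (g * x) z * P z (g * y))]
    refine Finset.sum_congr rfl fun z _ => ?_
    simp only [Equiv.coe_mulLeft]
    rw [ih, hP, hP]
    have : (S.filter fun s => g * z * s = g * y) = (S.filter fun s => z * s = y) := by
      ext s; simp [Finset.mem_filter, mul_assoc, mul_right_inj]
    rw [this]

lemma mylem_eigen {f : G → ℝ} {lam : ℝ} (hf : P.mulVec f = lam • f) (n : ℕ) :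
    (P ^ n).mulVec f = lam ^ n • f := by
  induction n with
  | zero => simp
  | succ n ih =>
    rw [pow_succ, pow_succ, ← Matrix.mulVec_mulVec, hf, Matrix.mulVec_smul, ih, smul_smul,
      mul_comm]

end

section
variable {G : Type*} [Fintype G] [DecidableEq G]

lemma mylem_quad (A : Matrix G G ℝ) (hsymA : ∀ x y, A x y = A y x)
    (hrow : ∀ x, ∑ y, A x y = 1) (f : G → ℝ) :
    ∑ x, f x * (f x - A.mulVec f x) = (1/2) * ∑ x, ∑ y, A x y * (f x - f y)^2 := by
  have hmv : ∀ x, A.mulVec f x = ∑ y, A x y * f y := fun x => rfl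
  have hcol : ∀ y, ∑ x, A x y = 1 := fun y =>
    (Finset.sum_congr rfl fun x _ => hsymA x y).trans (hrow y)
  have h1 : ∑ x, ∑ y, A x y * f x ^ 2 = ∑ x, f x ^ 2 := by
    refine Finset.sum_congr rfl fun x _ => ?_
    rw [← Finset.sum_mul, hrow, one_mul]
  have h2 : ∑ x, ∑ y, A x y * f y ^ 2 = ∑ x, f x ^ 2 := by
    rw [Finset.sum_comm]
    refine Finset.sum_congr rfl fun y _ => ?_
    rw [← Finset.sum_mul, hcol, one_mul]
  have h3 : ∑ x, ∑ y, A x y * (f x * f y) = ∑ x, f x * A.mulVec f x := by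
    refine Finset.sum_congr rfl fun x _ => ?_
    rw [hmv, Finset.mul_sum]
    exact Finset.sum_congr rfl fun y _ => by ring
  have expand : ∑ x, ∑ y, A x y * (f x - f y)^2
      = (∑ x, ∑ y, A x y * f x ^ 2) + (∑ x, ∑ y, A x y * f y ^ 2)
        - 2 * ∑ x, ∑ y, A x y * (f x * f y) := by
    rw [← Finset.sum_add_distrib, Finset.mul_sum, ← Finset.sum_sub_distrib]
    refine Finset.sum_congr rfl fun x _ => ?_
    rw [← Finset.sum_add_distrib, Finset.mul_sum, ← Finset.sum_sub_distrib]
    refine Finset.sum_congr rfl fun y _ => by ring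
  rw [expand, h1, h2, h3]
  have : ∑ x, f x * (f x - A.mulVec f x) = ∑ x, f x ^ 2 - ∑ x, f x * A.mulVec f x := by
    rw [← Finset.sum_sub_distrib]
    exact Finset.sum_congr rfl fun x _ => by ring
  rw [this]; ring

end

section
variable {G : Type*} [Group G] [Fintype G] [DecidableEq G]

lemma mylem_reindex (S : Finset G) (P : Matrix G G ℝ)
    (hP : ∀ x y, P x y = ((S.filter fun s => x * s = y).card : ℝ) / S.card)
    (n : ℕ) (f : G → ℝ) :
    ∑ x, ∑ y, (P ^ n) x y * (f x - f y)^2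
      = ∑ z, (P ^ n) 1 z * ∑ x, (f x - f (x * z))^2 := by
  have step : ∀ x : G, ∑ y, (P ^ n) x y * (f x - f y)^2
      = ∑ z, (P ^ n) 1 z * (f x - f (x * z))^2 := by
    intro x
    rw [← Equiv.sum_comp (Equiv.mulLeft x) (fun y => (P ^ n) x y * (f x - f y)^2)]
    refine Finset.sum_congr rfl fun z _ => ?_
    simp only [Equiv.coe_mulLeft]
    congr 1
    calc (P ^ n) x (x * z) = (P ^ n) (x * 1) (x * z) := by rw [mul_one]
      _ = (P ^ n) 1 z := mylem_shift S P hP n x 1 z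
  simp only [step]
  rw [Finset.sum_comm]
  exact Finset.sum_congr rfl fun z _ => by rw [Finset.mul_sum]

lemma mylem_path (S : Finset G) (f : G → ℝ) (l : List G) (hl : ∀ g ∈ l, g ∈ S) :
    ∑ x, (f x - f (x * l.prod))^2
      ≤ (l.length : ℝ)^2 * ∑ s ∈ S, ∑ x, (f x - f (x * s))^2 := by
  set k := l.length with hk
  set T := ∑ s ∈ S, ∑ x, (f x - f (x * s))^2 with hT
  have hTnonneg : ∀ s, 0 ≤ ∑ x, (f x - f (x * s))^2 := fun s =>
    Finset.sum_nonneg fun x _ => sq_nonneg _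
  -- pointwise Cauchy-Schwarz
  have point : ∀ x : G, (f x - f (x * l.prod))^2
      ≤ (k : ℝ) * ∑ i ∈ Finset.range k,
          (f (x * (l.take i).prod) - f (x * (l.take (i+1)).prod))^2 := by
    intro x
    have tel : f x - f (x * l.prod)
        = ∑ i ∈ Finset.range k,
            (f (x * (l.take i).prod) - f (x * (l.take (i+1)).prod)) := by
      rw [Finset.sum_range_sub' (f := fun i => f (x * (l.take i).prod))]
      simp [hk, List.take_of_length_le (le_refl l.length)]
    rw [tel]
    simpa using sq_sum_le_card_mul_sum_sq
      (s := Finset.range k)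
      (f := fun i => f (x * (l.take i).prod) - f (x * (l.take (i+1)).prod))
  have sum_point : ∑ x, (f x - f (x * l.prod))^2
      ≤ (k : ℝ) * ∑ i ∈ Finset.range k,
          ∑ x, (f (x * (l.take i).prod) - f (x * (l.take (i+1)).prod))^2 := by
    calc ∑ x, (f x - f (x * l.prod))^2
        ≤ ∑ x : G, (k : ℝ) * ∑ i ∈ Finset.range k,
            (f (x * (l.take i).prod) - f (x * (l.take (i+1)).prod))^2 :=
          Finset.sum_le_sum fun x _ => point x
      _ = (k : ℝ) * ∑ i ∈ Finset.range k,
            ∑ x, (f (x * (l.take i).prod) - f (x * (l.take (i+1)).prod))^2 := by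
          rw [← Finset.mul_sum, Finset.sum_comm]
  have inner : ∀ i ∈ Finset.range k,
      ∑ x, (f (x * (l.take i).prod) - f (x * (l.take (i+1)).prod))^2 ≤ T := by
    intro i hi
    have hik : i < l.length := Finset.mem_range.mp hi
    have hsucc : (l.take (i+1)).prod = (l.take i).prod * l[i] :=
      List.prod_take_succ l i hik
    have reidx : ∑ x, (f (x * (l.take i).prod) - f (x * (l.take (i+1)).prod))^2
        = ∑ u, (f u - f (u * l[i]))^2 := by
      rw [← Equiv.sum_comp (Equiv.mulRight ((l.take i).prod)⁻¹)
        (fun x => (f (x * (l.take i).prod) - f (x * (l.take (i+1)).prod))^2)]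
      refine Finset.sum_congr rfl fun u _ => ?_
      simp only [Equiv.coe_mulRight, hsucc]
      rw [inv_mul_cancel_right, ← mul_assoc, inv_mul_cancel_right]
    rw [reidx]
    exact Finset.single_le_sum (f := fun s => ∑ x, (f x - f (x * s))^2)
      (fun s _ => hTnonneg s) (hl _ (l.getElem_mem hik))
  calc ∑ x, (f x - f (x * l.prod))^2
      ≤ (k : ℝ) * ∑ i ∈ Finset.range k,
          ∑ x, (f (x * (l.take i).prod) - f (x * (l.take (i+1)).prod))^2 := sum_point
    _ ≤ (k : ℝ) * ∑ i ∈ Finset.range k, T := by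
        refine mul_le_mul_of_nonneg_left (Finset.sum_le_sum inner) (by positivity)
    _ = (k : ℝ)^2 * T := by
        rw [Finset.sum_const, Finset.card_range, nsmul_eq_mul]; ring

end

section
variable {G : Type*} [Group G] [Fintype G] [DecidableEq G]

lemma mylem_word (S : Finset G) (hsym : ∀ s ∈ S, s⁻¹ ∈ S)
    (hgen : Subgroup.closure (S : Set G) = ⊤) (z : G) :
    ∃ l : List G, (∀ g ∈ l, g ∈ S) ∧ l.prod = z := by
  have hz : z ∈ Subgroup.closure (S : Set G) := hgen ▸ Subgroup.mem_top z
  have hz' : z ∈ Submonoid.closure ((S : Set G) ∪ (S : Set G)⁻¹) := by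
    rw [← Subgroup.closure_toSubmonoid]; exact hz
  obtain ⟨l, hl, hprod⟩ := Submonoid.exists_list_of_mem_closure hz'
  refine ⟨l, fun g hg => ?_, hprod⟩
  rcases hl g hg with h | h
  · exact h
  · have := hsym g⁻¹ (Set.mem_inv.mp h)
    simpa using this

lemma mylem_geodesic (S : Finset G) (hsym : ∀ s ∈ S, s⁻¹ ∈ S)
    (hgen : Subgroup.closure (S : Set G) = ⊤)
    (dist : G → G → ℕ)
    (hdist : ∀ x y, dist x y
      = sInf {k | ∃ l : List G, l.length = k ∧ (∀ g ∈ l, g ∈ S) ∧ x * l.prod = y})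
    (z : G) :
    ∃ l : List G, l.length = dist 1 z ∧ (∀ g ∈ l, g ∈ S) ∧ l.prod = z := by
  obtain ⟨l0, hl0, hp0⟩ := mylem_word S hsym hgen z
  have hne : {k | ∃ l : List G, l.length = k ∧ (∀ g ∈ l, g ∈ S) ∧ 1 * l.prod = z}.Nonempty :=
    ⟨l0.length, l0, rfl, hl0, by rw [one_mul, hp0]⟩
  have := Nat.sInf_mem hne
  rw [← hdist 1 z] at this
  obtain ⟨l, hlen, hmem, hprod⟩ := this
  exact ⟨l, hlen, hmem, by rwa [one_mul] at hprod⟩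

end

section
variable {G : Type*} [Group G] [Fintype G] [DecidableEq G]

lemma mylem_abs_le_one (S : Finset G) (P : Matrix G G ℝ) (hS : S.Nonempty)
    (hP : ∀ x y, P x y = ((S.filter fun s => x * s = y).card : ℝ) / S.card)
    {f : G → ℝ} {lam : ℝ} (hf0 : f ≠ 0) (hf : P.mulVec f = lam • f) :
    |lam| ≤ 1 := by
  obtain ⟨x₀, -, hx₀⟩ := Finset.exists_max_image Finset.univ (fun x => |f x|)
    Finset.univ_nonempty
  obtain ⟨x₁, hx₁⟩ := Function.ne_iff.mp hf0
  have hpos : 0 < |f x₀| := lt_of_lt_of_le (abs_pos.mpr hx₁) (hx₀ x₁ (Finset.mem_univ _))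
  have key : |lam| * |f x₀| ≤ |f x₀| := by
    have h1 : |lam * f x₀| = |(P.mulVec f) x₀| := by rw [hf]; simp [mul_comm]
    calc |lam| * |f x₀| = |lam * f x₀| := (abs_mul _ _).symm
      _ = |∑ y, P x₀ y * f y| := by rw [h1]; rfl
      _ ≤ ∑ y, |P x₀ y * f y| := Finset.abs_sum_le_sum_abs _ _
      _ ≤ ∑ y, P x₀ y * |f x₀| := by
          refine Finset.sum_le_sum fun y _ => ?_
          rw [abs_mul, abs_of_nonneg (mylem_nonneg S P hP x₀ y)]
          exact mul_le_mul_of_nonneg_left (hx₀ y (Finset.mem_univ _))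
            (mylem_nonneg S P hP x₀ y)
      _ = |f x₀| := by rw [← Finset.sum_mul, mylem_rowsum S P hS hP, one_mul]
  exact le_of_mul_le_mul_right (by linarith) hpos

lemma mylem_key (S : Finset G) (P : Matrix G G ℝ) (hS : S.Nonempty)
    (hsym : ∀ s ∈ S, s⁻¹ ∈ S)
    (hgen : Subgroup.closure (S : Set G) = ⊤)
    (hP : ∀ x y, P x y = ((S.filter fun s => x * s = y).card : ℝ) / S.card)
    (dist : G → G → ℕ)
    (hdist : ∀ x y, dist x y
      = sInf {k | ∃ l : List G, l.length = k ∧ (∀ g ∈ l, g ∈ S) ∧ x * l.prod = y})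
    {f : G → ℝ} {lam : ℝ} (hf0 : f ≠ 0) (hf : P.mulVec f = lam • f) (n : ℕ) :
    1 - lam ^ n ≤ (S.card : ℝ) * (1 - lam) * ∑ z, (P ^ n) 1 z * ((dist 1 z : ℝ))^2 := by
  set N := ∑ x, f x ^ 2 with hN
  have hNpos : 0 < N := by
    obtain ⟨x₁, hx₁⟩ := Function.ne_iff.mp hf0
    have : ∀ x ∈ Finset.univ, 0 ≤ f x ^ 2 := fun x _ => sq_nonneg _
    exact Finset.sum_pos' this ⟨x₁, Finset.mem_univ _, pow_two_pos_of_ne_zero hx₁⟩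
  -- Dirichlet form value
  have hQ : ∀ m : ℕ, ∑ x, f x * (f x - (P ^ m).mulVec f x) = (1 - lam ^ m) * N := by
    intro m
    rw [mylem_eigen P hf m, hN, Finset.mul_sum]
    refine Finset.sum_congr rfl fun x _ => ?_
    simp [Pi.smul_apply, smul_eq_mul]; ring
  have hform : ∀ m : ℕ, ∑ x, f x * (f x - (P ^ m).mulVec f x)
      = (1/2) * ∑ z, (P ^ m) 1 z * ∑ x, (f x - f (x * z))^2 := by
    intro m
    rw [mylem_quad (P ^ m) (mylem_pow_symm S P hsym hP m) (mylem_pow_rowsum S P hS hP m) f,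
      mylem_reindex S P hP m f]
  set T := ∑ s ∈ S, ∑ x, (f x - f (x * s))^2 with hT
  -- T = 2 * d * (1 - lam) * N
  have hTval : T = 2 * (S.card : ℝ) * (1 - lam) * N := by
    have h1 := hform 1
    rw [hQ 1, pow_one, pow_one] at h1
    have h2 : ∑ z, P 1 z * ∑ x, (f x - f (x * z))^2 = T / S.card := by
      rw [mylem_action S P hP 1 (fun z => ∑ x, (f x - f (x * z))^2), hT]
      congr 1
      exact Finset.sum_congr rfl fun s _ => by rw [one_mul]
    have hd : (0:ℝ) < S.card := by exact_mod_cast hS.card_pos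
    rw [h2] at h1
    field_simp at h1 ⊢
    linarith
  have hTnn : 0 ≤ T := Finset.sum_nonneg fun s _ => Finset.sum_nonneg fun x _ => sq_nonneg _
  -- pathwise bound
  have hbound : (1 - lam ^ n) * N
      ≤ (1/2) * ∑ z, (P ^ n) 1 z * (((dist 1 z : ℝ))^2 * T) := by
    rw [← hQ n, hform n]
    refine mul_le_mul_of_nonneg_left (Finset.sum_le_sum fun z _ => ?_) (by norm_num)
    refine mul_le_mul_of_nonneg_left ?_ (mylem_pow_nonneg S P hP n 1 z)
    obtain ⟨l, hlen, hmem, hprod⟩ := mylem_geodesic S hsym hgen dist hdist z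
    calc ∑ x, (f x - f (x * z))^2 = ∑ x, (f x - f (x * l.prod))^2 := by rw [hprod]
      _ ≤ (l.length : ℝ)^2 * T := mylem_path S f l hmem
      _ = ((dist 1 z : ℝ))^2 * T := by rw [hlen]
  have : (1/2) * ∑ z, (P ^ n) 1 z * (((dist 1 z : ℝ))^2 * T)
      = (S.card : ℝ) * (1 - lam) * N * ∑ z, (P ^ n) 1 z * ((dist 1 z : ℝ))^2 := by
    rw [Finset.mul_sum, Finset.mul_sum]
    refine Finset.sum_congr rfl fun z _ => ?_
    rw [hTval]; ring
  rw [this] at hbound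
  have h2 : (1 - lam ^ n) * N
      ≤ ((S.card : ℝ) * (1 - lam) * ∑ z, (P ^ n) 1 z * ((dist 1 z : ℝ))^2) * N := by
    calc (1 - lam ^ n) * N ≤ _ := hbound
      _ = ((S.card : ℝ) * (1 - lam) * ∑ z, (P ^ n) 1 z * ((dist 1 z : ℝ))^2) * N := by ring
  exact le_of_mul_le_mul_right h2 hNpos

end

lemma mylem_gauss (n : ℕ) : ∑ i ∈ Finset.range n, (i : ℝ) = n * (n - 1) / 2 := by
  induction n with
  | zero => simp
  | succ n ih => rw [Finset.sum_range_succ, ih]; push_cast; ring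

lemma mylem_geom (lam : ℝ) (hlow : -1 ≤ lam) (hup : lam ≤ 1) (n : ℕ) (hn : (n : ℝ) * (1 - lam) ≤ 1) :
    (n : ℝ) / 2 * (1 - lam) ≤ 1 - lam ^ n := by
  have hgeom : (1 - lam) * ∑ k ∈ Finset.range n, lam ^ k = 1 - lam ^ n := by
    have h := geom_sum_mul lam n
    linear_combination -h
  have hterm : ∀ k ∈ Finset.range n, 1 + (k : ℝ) * (lam - 1) ≤ lam ^ k := by
    intro k _
    have := one_add_mul_le_pow (a := lam - 1) (by linarith) k
    simpa using this
  have hsum := Finset.sum_le_sum hterm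
  have hlhs : ∑ k ∈ Finset.range n, (1 + (k : ℝ) * (lam - 1))
      = n + (lam - 1) * (n * (n - 1) / 2) := by
    rw [Finset.sum_add_distrib, Finset.sum_const, Finset.card_range, nsmul_eq_mul, mul_one]
    rw [← Finset.sum_mul, mylem_gauss]
    ring
  rw [hlhs] at hsum
  -- so ∑ lam^k ≥ n - (1-lam)*n*(n-1)/2 ≥ n/2
  have hn0 : (0:ℝ) ≤ n := Nat.cast_nonneg n
  have hgap : 0 ≤ 1 - lam := by linarith
  have key : (n : ℝ) / 2 ≤ ∑ k ∈ Finset.range n, lam ^ k := by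
    rcases Nat.eq_zero_or_pos n with h0 | hpos
    · subst h0; simp
    have h1n : (1:ℝ) ≤ n := by exact_mod_cast hpos
    nlinarith [mul_nonneg hgap (by linarith : (0:ℝ) ≤ (n:ℝ) - 1)]
  calc (n : ℝ) / 2 * (1 - lam) ≤ (∑ k ∈ Finset.range n, lam ^ k) * (1 - lam) :=
        mul_le_mul_of_nonneg_right key hgap
    _ = 1 - lam ^ n := by rw [mul_comm]; exact hgeom

/-- For simple random walk on a finite Cayley graph of a group `G` with symmetric generating
set `S` of size `d`, if `λ` is the second largest eigenvalue of the transition matrix `P` and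
`n ≤ 1/(1−λ)`, then `E[ρ(X_0, X_n)²] ≥ n/(2d)` (starting from the identity, by transitivity),
where `ρ` is the graph distance. Consequently the relaxation time satisfies
`t_rel = 1/(1−λ) ≤ 2 d · diam(G)²`. -/
theorem cayley_displacement_and_relaxation {G : Type*} [Group G] [Fintype G] [DecidableEq G]
    (S : Finset G) (hS : S.Nonempty) (hsym : ∀ s ∈ S, s⁻¹ ∈ S)
    (hgen : Subgroup.closure (S : Set G) = ⊤)
    (P : Matrix G G ℝ)
    (hP : ∀ x y, P x y = ((S.filter fun s => x * s = y).card : ℝ) / S.card)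
    (dist : G → G → ℕ)
    (hdist : ∀ x y, dist x y
      = sInf {k | ∃ l : List G, l.length = k ∧ (∀ g ∈ l, g ∈ S) ∧ x * l.prod = y})
    (lam : ℝ) (heig : ∃ f : G → ℝ, f ≠ 0 ∧ P.mulVec f = lam • f) (hlam1 : lam ≠ 1)
    (hsecond : ∀ mu : ℝ, (∃ f : G → ℝ, f ≠ 0 ∧ P.mulVec f = mu • f) → mu = 1 ∨ mu ≤ lam) :
    (∀ n : ℕ, (n : ℝ) ≤ 1 / (1 - lam) →
      (n : ℝ) / (2 * S.card) ≤ ∑ y : G, (P ^ n) 1 y * ((dist 1 y : ℝ)) ^ 2) ∧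
    1 / (1 - lam)
      ≤ 2 * S.card * ((Finset.univ.sup fun p : G × G => dist p.1 p.2 : ℕ) : ℝ) ^ 2 := by
  obtain ⟨f, hf0, hf⟩ := heig
  have habs : |lam| ≤ 1 := mylem_abs_le_one S P hS hP hf0 hf
  have hup : lam ≤ 1 := (abs_le.mp habs).2
  have hlow : -1 ≤ lam := (abs_le.mp habs).1
  have hlt : lam < 1 := lt_of_le_of_ne hup hlam1
  have hgap : 0 < 1 - lam := by linarith
  have hd : (0:ℝ) < S.card := by exact_mod_cast hS.card_pos
  have hkey := fun n => mylem_key S P hS hsym hgen hP dist hdist hf0 hf n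
  set E : ℕ → ℝ := fun n => ∑ z, (P ^ n) 1 z * ((dist 1 z : ℝ))^2 with hE
  have part1 : ∀ n : ℕ, (n : ℝ) ≤ 1 / (1 - lam) →
      (n : ℝ) / (2 * S.card) ≤ E n := by
    intro n hn
    have hn' : (n : ℝ) * (1 - lam) ≤ 1 := by
      rw [le_div_iff₀ hgap] at hn; linarith
    have hgeo := mylem_geom lam hlow hup n hn'
    have := hkey n
    rw [div_le_iff₀ (by positivity)]
    nlinarith [this, hgeo]
  refine ⟨part1, ?_⟩
  -- part 2
  set D : ℕ := Finset.univ.sup fun p : G × G => dist p.1 p.2 with hD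
  have hDle : ∀ z : G, (dist 1 z : ℝ) ≤ (D : ℝ) := by
    intro z
    exact_mod_cast Nat.cast_le.mpr (Finset.le_sup (f := fun p : G × G => dist p.1 p.2)
      (Finset.mem_univ (1, z)))
  have hEle : ∀ n : ℕ, E n ≤ (D : ℝ)^2 := by
    intro n
    calc E n ≤ ∑ z, (P ^ n) 1 z * (D : ℝ)^2 := by
          refine Finset.sum_le_sum fun z _ => ?_
          refine mul_le_mul_of_nonneg_left ?_ (mylem_pow_nonneg S P hP n 1 z)
          exact pow_le_pow_left₀ (Nat.cast_nonneg _) (hDle z) 2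
      _ = (D : ℝ)^2 := by rw [← Finset.sum_mul, mylem_pow_rowsum S P hS hP, one_mul]
  have hCkey : ∀ n : ℕ, 1 - lam ^ n ≤ (S.card : ℝ) * (1 - lam) * (D : ℝ)^2 := by
    intro n
    calc 1 - lam ^ n ≤ (S.card : ℝ) * (1 - lam) * E n := hkey n
      _ ≤ (S.card : ℝ) * (1 - lam) * (D : ℝ)^2 := by
          exact mul_le_mul_of_nonneg_left (hEle n) (by positivity)
  have hd1 : (1:ℝ) ≤ S.card := by exact_mod_cast hS.card_pos
  -- |G| ≥ 2 hence D ≥ 1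
  have hy : ∃ y : G, y ≠ 1 := by
    by_contra h
    push_neg at h
    have h1 : P.mulVec f 1 = f 1 := by
      have : ∀ y : G, f y = f 1 := fun y => by rw [h y]
      calc P.mulVec f 1 = ∑ y, P 1 y * f y := rfl
        _ = ∑ y, P 1 y * f 1 := Finset.sum_congr rfl fun y _ => by rw [this y]
        _ = f 1 := by rw [← Finset.sum_mul, mylem_rowsum S P hS hP, one_mul]
    have h2 : P.mulVec f 1 = lam * f 1 := by rw [hf]; rfl
    have hf1 : f 1 ≠ 0 := by
      intro hc
      apply hf0
      funext x
      rw [h x, hc]; rfl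
    exact hlam1 (mul_right_cancel₀ hf1 (by rw [one_mul, ← h2, h1]))
  have hD1 : (1:ℝ) ≤ (D : ℝ) := by
    obtain ⟨y, hy1⟩ := hy
    have hdy : 1 ≤ dist 1 y := by
      by_contra h
      push_neg at h
      interval_cases hdy : dist 1 y
      obtain ⟨l, hlen, -, hprod⟩ := mylem_geodesic S hsym hgen dist hdist y
      rw [hdy] at hlen
      have : l = [] := List.length_eq_zero_iff.mp hlen
      rw [this] at hprod
      exact hy1 (by simpa using hprod.symm)
    have : 1 ≤ D := le_trans hdy (Finset.le_sup (f := fun p : G × G => dist p.1 p.2)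
      (Finset.mem_univ (1, y)))
    exact_mod_cast this
  rcases eq_or_lt_of_le hlow with heq | hlt'
  · -- lam = -1
    rw [← heq]
    norm_num
    nlinarith [sq_nonneg ((D:ℝ) - 1)]
  · -- |lam| < 1
    have habs' : |lam| < 1 := abs_lt.mpr ⟨hlt', hlt⟩
    have htend : Filter.Tendsto (fun n : ℕ => 1 - lam ^ n) Filter.atTop (nhds 1) := by
      have h0 : Filter.Tendsto (fun n : ℕ => lam ^ n) Filter.atTop (nhds 0) :=
        tendsto_pow_atTop_nhds_zero_of_abs_lt_one habs'
      simpa using (tendsto_const_nhds (x := (1:ℝ))).sub h0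
    have h1le : (1:ℝ) ≤ (S.card : ℝ) * (1 - lam) * (D : ℝ)^2 :=
      le_of_tendsto' htend hCkey
    rw [div_le_iff₀ hgap]
    nlinarith [sq_nonneg (D:ℝ)]
end
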